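/- arXiv:2007.13888 — 5 statements merged into one kernel-verified Lean document; each statement's English description precedes it below -/
import Mathlib

section
/- (Uniform fourth-moment bounds for the scores and the forecast errors.) Let Assumption 1 and part (i) of Assumption 2 hold. Then for all horizons h ∈ ℕ, all coefficient matrices A ∈ 𝒜(0,C,ε), all i ∈ {1,…,n} and all w ∈ ℝ^n∖{0}: (a) E[ ( v_i(A,h,w)^{−1} ξ_{i,t}(A,h) (w'u_t) )^4 ] ≤ 6 E‖u_t‖^8 / ( δ² λ_min(Σ)² ), and (b) E[ ( v_i(A,h,w)^{−1} ξ_{i,t}(A,h) )^4 ] ≤ 6 E‖u_t‖^4 / ( δ² λ_min(Σ)² ‖w‖^4 ). -/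
open MeasureTheory Filter Finset Matrix Topology

noncomputable section

namespace LP

variable {Ω : Type} [MeasurableSpace Ω]

/-- The σ-algebra generated by the random variables `u s`, `s ∈ S`. -/
def sigmaGen {E : Type*} [MeasurableSpace E] (u : ℤ → Ω → E) (S : Set ℤ) :
    MeasurableSpace Ω :=
  ⨆ s ∈ S, MeasurableSpace.comap (u s) inferInstance

/-- Strict stationarity of a process indexed by `ℤ`. -/
def StrictlyStationary {E : Type*} [MeasurableSpace E] (μ : Measure Ω) (u : ℤ → Ω → E) :
    Prop :=
  ∀ (m : ℕ) (t : ℤ),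
    Measure.map (fun ω (j : Fin m) => u (t + (j : ℕ)) ω) μ
      = Measure.map (fun ω (j : Fin m) => u ((j : ℕ) : ℤ) ω) μ

/-- Joint cumulant of order 2 (covariance). -/
def cum2 (μ : Measure Ω) (f g : Ω → ℝ) : ℝ :=
  (∫ ω, f ω * g ω ∂μ) - (∫ ω, f ω ∂μ) * (∫ ω, g ω ∂μ)

/-- Joint cumulant of order 3. -/
def cum3 (μ : Measure Ω) (f g h : Ω → ℝ) : ℝ :=
  (∫ ω, f ω * g ω * h ω ∂μ)
    - (∫ ω, f ω * g ω ∂μ) * (∫ ω, h ω ∂μ)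
    - (∫ ω, f ω * h ω ∂μ) * (∫ ω, g ω ∂μ)
    - (∫ ω, g ω * h ω ∂μ) * (∫ ω, f ω ∂μ)
    + 2 * (∫ ω, f ω ∂μ) * (∫ ω, g ω ∂μ) * (∫ ω, h ω ∂μ)

/-- Joint cumulant of order 4. -/
def cum4 (μ : Measure Ω) (f g h k : Ω → ℝ) : ℝ :=
  (∫ ω, f ω * g ω * h ω * k ω ∂μ)
    - (∫ ω, f ω * g ω ∂μ) * (∫ ω, h ω * k ω ∂μ)
    - (∫ ω, f ω * h ω ∂μ) * (∫ ω, g ω * k ω ∂μ)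
    - (∫ ω, f ω * k ω ∂μ) * (∫ ω, g ω * h ω ∂μ)
    - (∫ ω, f ω * g ω * h ω ∂μ) * (∫ ω, k ω ∂μ)
    - (∫ ω, f ω * g ω * k ω ∂μ) * (∫ ω, h ω ∂μ)
    - (∫ ω, f ω * h ω * k ω ∂μ) * (∫ ω, g ω ∂μ)
    - (∫ ω, g ω * h ω * k ω ∂μ) * (∫ ω, f ω ∂μ)
    + 2 * ((∫ ω, f ω * g ω ∂μ) * (∫ ω, h ω ∂μ) * (∫ ω, k ω ∂μ)
      + (∫ ω, f ω * h ω ∂μ) * (∫ ω, g ω ∂μ) * (∫ ω, k ω ∂μ)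
      + (∫ ω, f ω * k ω ∂μ) * (∫ ω, g ω ∂μ) * (∫ ω, h ω ∂μ)
      + (∫ ω, g ω * h ω ∂μ) * (∫ ω, f ω ∂μ) * (∫ ω, k ω ∂μ)
      + (∫ ω, g ω * k ω ∂μ) * (∫ ω, f ω ∂μ) * (∫ ω, h ω ∂μ)
      + (∫ ω, h ω * k ω ∂μ) * (∫ ω, f ω ∂μ) * (∫ ω, g ω ∂μ))
    - 6 * (∫ ω, f ω ∂μ) * (∫ ω, g ω ∂μ) * (∫ ω, h ω ∂μ) * (∫ ω, k ω ∂μ)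

/-- Smallest eigenvalue of a symmetric matrix, via the Rayleigh quotient. -/
def lammin {ι : Type*} [Fintype ι] (M : Matrix ι ι ℝ) : ℝ :=
  sInf {r : ℝ | ∃ x : ι → ℝ, (∑ i, (x i) ^ 2) = 1 ∧ r = x ⬝ᵥ M.mulVec x}

/-- Frobenius norm of a matrix. -/
def frobNorm {ι κ : Type*} [Fintype ι] [Fintype κ] (M : Matrix ι κ ℝ) : ℝ :=
  Real.sqrt (∑ i, ∑ j, (M i j) ^ 2)

/-- Euclidean norm of a vector. -/
def euclNorm {ι : Type*} [Fintype ι] (v : ι → ℝ) : ℝ :=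
  Real.sqrt (∑ i, (v i) ^ 2)

variable {n p : ℕ}

/-- The process `u_t ⊗ u_t`. -/
def zsq (u : ℤ → Ω → (Fin n → ℝ)) (t : ℤ) (ω : Ω) : Fin n × Fin n → ℝ :=
  fun q => u t ω q.1 * u t ω q.2

/-- Absolutely summable joint cumulants up to order 4 of the process `u_t ⊗ u_t`. -/
def AbsSummableCumulants4 (μ : Measure Ω) (u : ℤ → Ω → (Fin n → ℝ)) : Prop :=
  (∀ a b : Fin n × Fin n,
    Summable fun t : ℤ => |cum2 μ (fun ω => zsq u 0 ω a) (fun ω => zsq u t ω b)|) ∧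
  (∀ a b c : Fin n × Fin n,
    Summable fun t : ℤ × ℤ =>
      |cum3 μ (fun ω => zsq u 0 ω a) (fun ω => zsq u t.1 ω b) (fun ω => zsq u t.2 ω c)|) ∧
  (∀ a b c d : Fin n × Fin n,
    Summable fun t : ℤ × ℤ × ℤ =>
      |cum4 μ (fun ω => zsq u 0 ω a) (fun ω => zsq u t.1 ω b)
        (fun ω => zsq u t.2.1 ω c) (fun ω => zsq u t.2.2 ω d)|)

/-- Assumption 1: conditional mean independence of the innovations with respect to
past and future innovations. -/
def Assumption1 (μ : Measure Ω) (u : ℤ → Ω → (Fin n → ℝ)) : Prop :=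
  ∀ t : ℤ, μ[u t | sigmaGen u {s : ℤ | s ≠ t}] =ᵐ[μ] 0

/-- Conditional second moment matrix `E[u_t u_t' ∣ {u_s}_{s<t}]` (entrywise). -/
def condSecondMoment (μ : Measure Ω) (u : ℤ → Ω → (Fin n → ℝ)) (t : ℤ) (ω : Ω) :
    Matrix (Fin n) (Fin n) ℝ :=
  Matrix.of fun a b => (μ[fun ω' => u t ω' a * u t ω' b | sigmaGen u {s : ℤ | s < t}]) ω

/-- Assumption 2 (with explicit constant `δ`). -/
def Assumption2 (μ : Measure Ω) (u : ℤ → Ω → (Fin n → ℝ)) (δ : ℝ) : Prop :=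
  0 < δ ∧
  (∀ t : ℤ, Integrable (fun ω => (∑ a, (u t ω a) ^ 2) ^ 4) μ) ∧
  (∀ t : ℤ, ∀ᵐ ω ∂μ, δ ≤ lammin (condSecondMoment μ u t ω)) ∧
  AbsSummableCumulants4 μ u

/-- The data `y` is generated by the VAR(p) model with coefficients `A`,
innovations `u`, and zero initial conditions. -/
def IsVARProcess (u : ℤ → Ω → (Fin n → ℝ)) (A : Fin p → Matrix (Fin n) (Fin n) ℝ)
    (y : ℤ → Ω → (Fin n → ℝ)) : Prop :=
  (∀ t : ℤ, t ≤ 0 → y t = 0) ∧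
  (∀ t : ℤ, 1 ≤ t → ∀ ω,
    y t ω = (∑ ℓ : Fin p, (A ℓ).mulVec (y (t - ((ℓ : ℕ) + 1)) ω)) + u t ω)

/-- Companion matrix of a collection of `m` square matrices of size `n`. -/
def companion {m : ℕ} (M : Fin m → Matrix (Fin n) (Fin n) ℝ) :
    Matrix (Fin m × Fin n) (Fin m × Fin n) ℝ :=
  Matrix.of fun q r =>
    if (q.1 : ℕ) = 0 then M r.1 q.2 r.2
    else if (q.1 : ℕ) = (r.1 : ℕ) + 1 then (if q.2 = r.2 then 1 else 0) else 0

/-- Horizon-`h` impulse responses of variable `i`: `β_i(A,h)' = e_i' J 𝐀^h J'`. -/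
def irf (hp : 0 < p) (A : Fin p → Matrix (Fin n) (Fin n) ℝ) (h : ℕ) (i : Fin n) :
    Fin n → ℝ :=
  fun b => ((companion A) ^ h) (⟨0, hp⟩, i) (⟨0, hp⟩, b)

/-- Multi-step forecast error `ξ_{i,t}(A,h) = Σ_{ℓ=1}^h β_i(A,h−ℓ)' u_{t+ℓ}`. -/
def xi (hp : 0 < p) (A : Fin p → Matrix (Fin n) (Fin n) ℝ) (h : ℕ) (i : Fin n)
    (u : ℤ → Ω → (Fin n → ℝ)) (t : ℤ) (ω : Ω) : ℝ :=
  ∑ ℓ ∈ Finset.range h, irf hp A (h - 1 - ℓ) i ⬝ᵥ u (t + (ℓ : ℤ) + 1) ω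

/-- `v_i(A,h,w) = (E[ξ_{i,t}(A,h)² (w'u_t)²])^{1/2}`. -/
def vfun (μ : Measure Ω) (hp : 0 < p) (A : Fin p → Matrix (Fin n) (Fin n) ℝ) (h : ℕ)
    (i : Fin n) (u : ℤ → Ω → (Fin n → ℝ)) (w : Fin n → ℝ) : ℝ :=
  Real.sqrt (∫ ω, (xi hp A h i u 0 ω) ^ 2 * (w ⬝ᵥ u 0 ω) ^ 2 ∂μ)

/-- `g(ρ,h)² = min{1/(1−|ρ|), h}` (equal to `h` when `|ρ| = 1`). -/
def gsq (ρ : ℝ) (h : ℕ) : ℝ := if |ρ| < 1 then min (1 / (1 - |ρ|)) (h : ℝ) else (h : ℝ)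

def gfun (ρ : ℝ) (h : ℕ) : ℝ := Real.sqrt (gsq ρ h)

/-- `ρ* = max{|ρ|, 1 − ε/2}`. -/
def rhoStar (r ε : ℝ) : ℝ := max |r| (1 - ε / 2)

/-- The diagonal scaling matrix `G(A,h,ε)` (expressed via a root vector `ρ`). -/
def Gmat (p : ℕ) {n : ℕ} (ρ : Fin n → ℝ) (h : ℕ) (ε : ℝ) :
    Matrix (Fin p × Fin n) (Fin p × Fin n) ℝ :=
  Matrix.diagonal fun q => gfun (rhoStar (ρ q.2) ε) h

/-- Factorization `A(L) = B(L)(I − diag(ρ)L)` with geometrically decaying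
companion powers for `B`; `Cc` are the coefficients of `B(L) = Σ_ℓ Cc_ℓ L^ℓ`. -/
def IsFactorization (a Cb ε : ℝ) (A : Fin p → Matrix (Fin n) (Fin n) ℝ)
    (ρ : Fin n → ℝ) (Cc : ℕ → Matrix (Fin n) (Fin n) ℝ) : Prop :=
  (∀ i, a - 1 ≤ ρ i ∧ ρ i ≤ 1 - a) ∧
  Cc 0 = 1 ∧
  (∀ ℓ : ℕ, p ≤ ℓ → Cc ℓ = 0) ∧
  (∀ k : Fin p, A k = Cc (k : ℕ) * Matrix.diagonal ρ - Cc ((k : ℕ) + 1)) ∧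
  (∀ ℓ : ℕ, 1 ≤ ℓ →
    frobNorm ((companion (fun j : Fin (p - 1) => -Cc ((j : ℕ) + 1))) ^ ℓ) ≤ Cb * (1 - ε) ^ ℓ)

/-- The parameter space `𝒜(a,C,ε)`. -/
def paramSpace (n p : ℕ) (a Cb ε : ℝ) : Set (Fin p → Matrix (Fin n) (Fin n) ℝ) :=
  {A | ∃ ρ Cc, IsFactorization a Cb ε A ρ Cc}

/-- `X_t = (y_{t−1}', …, y_{t−p}')'`. -/
def Xt (p : ℕ) (y : ℤ → Ω → (Fin n → ℝ)) (t : ℤ) (ω : Ω) : Fin p × Fin n → ℝ :=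
  fun q => y (t - ((q.1 : ℕ) + 1 : ℤ)) ω q.2

/-- Sum over the estimation sample `t = 1, …, T − h`. -/
def sumT {α : Type*} [AddCommMonoid α] (T h : ℕ) (f : ℤ → α) : α :=
  ∑ s ∈ Finset.range (T - h), f ((s : ℤ) + 1)

/-- The regressor vector `x_t = (y_t', X_t')'`. -/
def xvec (p : ℕ) (y : ℤ → Ω → (Fin n → ℝ)) (t : ℤ) (ω : Ω) :
    (Fin n ⊕ (Fin p × Fin n)) → ℝ :=
  Sum.elim (y t ω) (Xt p y t ω)

def xxMatrix (p : ℕ) (y : ℤ → Ω → (Fin n → ℝ)) (T h : ℕ) (ω : Ω) :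
    Matrix (Fin n ⊕ (Fin p × Fin n)) (Fin n ⊕ (Fin p × Fin n)) ℝ :=
  Matrix.of fun i j => sumT T h fun t => xvec p y t ω i * xvec p y t ω j

/-- Lag-augmented LP regression coefficients `(β̂_1(h)', γ̂_1(h)')'`. -/
def lpCoef (p : ℕ) (hn : 0 < n) (y : ℤ → Ω → (Fin n → ℝ)) (T h : ℕ) (ω : Ω) :
    (Fin n ⊕ (Fin p × Fin n)) → ℝ :=
  (xxMatrix p y T h ω)⁻¹.mulVec fun i =>
    sumT T h fun t => xvec p y t ω i * y (t + (h : ℤ)) ω ⟨0, hn⟩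

/-- The lag-augmented LP impulse response estimator `β̂_1(h)`. -/
def betaHat (p : ℕ) (hn : 0 < n) (y : ℤ → Ω → (Fin n → ℝ)) (T h : ℕ) (ω : Ω) :
    Fin n → ℝ :=
  fun a => lpCoef p hn y T h ω (Sum.inl a)

/-- The nuisance coefficient estimator `γ̂_1(h)`. -/
def gammaHat (p : ℕ) (hn : 0 < n) (y : ℤ → Ω → (Fin n → ℝ)) (T h : ℕ) (ω : Ω) :
    Fin p × Fin n → ℝ :=
  fun q => lpCoef p hn y T h ω (Sum.inr q)

def XXhmat (p : ℕ) (y : ℤ → Ω → (Fin n → ℝ)) (T h : ℕ) (ω : Ω) :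
    Matrix (Fin p × Fin n) (Fin p × Fin n) ℝ :=
  Matrix.of fun q r => sumT T h fun t => Xt p y t ω q * Xt p y t ω r

/-- The VAR OLS estimator `Â(h)`. -/
def Ahat (p : ℕ) (y : ℤ → Ω → (Fin n → ℝ)) (T h : ℕ) (ω : Ω) :
    Matrix (Fin n) (Fin p × Fin n) ℝ :=
  (Matrix.of fun a q => sumT T h fun t => y t ω a * Xt p y t ω q) * (XXhmat p y T h ω)⁻¹

/-- VAR residuals `û_t(h) = y_t − Â(h)X_t`. -/
def uhat (p : ℕ) (y : ℤ → Ω → (Fin n → ℝ)) (T h : ℕ) (t : ℤ) (ω : Ω) : Fin n → ℝ :=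
  fun a => y t ω a - (Ahat p y T h ω).mulVec (Xt p y t ω) a

/-- LP residuals `ξ̂_{1,t}(h)`. -/
def xihat (p : ℕ) (hn : 0 < n) (y : ℤ → Ω → (Fin n → ℝ)) (T h : ℕ) (t : ℤ) (ω : Ω) : ℝ :=
  y (t + (h : ℤ)) ω ⟨0, hn⟩ - betaHat p hn y T h ω ⬝ᵥ y t ω
    - gammaHat p hn y T h ω ⬝ᵥ Xt p y t ω

def SigmaHat (p : ℕ) (y : ℤ → Ω → (Fin n → ℝ)) (T h : ℕ) (ω : Ω) :
    Matrix (Fin n) (Fin n) ℝ :=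
  (((T - h : ℕ) : ℝ))⁻¹ •
    Matrix.of fun a b => sumT T h fun t => uhat p y T h t ω a * uhat p y T h t ω b

def scoreMat (p : ℕ) (hn : 0 < n) (y : ℤ → Ω → (Fin n → ℝ)) (T h : ℕ) (ω : Ω) :
    Matrix (Fin n) (Fin n) ℝ :=
  Matrix.of fun a b => sumT T h fun t =>
    (xihat p hn y T h t ω) ^ 2 * uhat p y T h t ω a * uhat p y T h t ω b

/-- Eicker–Huber–White standard error `ŝ_1(h,ν)`. -/
def sHat (p : ℕ) (hn : 0 < n) (ν : Fin n → ℝ) (y : ℤ → Ω → (Fin n → ℝ)) (T h : ℕ)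
    (ω : Ω) : ℝ :=
  (((T - h : ℕ) : ℝ))⁻¹ *
    Real.sqrt (ν ⬝ᵥ (SigmaHat p y T h ω)⁻¹.mulVec
      ((scoreMat p hn y T h ω).mulVec ((SigmaHat p y T h ω)⁻¹.mulVec ν)))

/-- `Σ = E[u_t u_t']`. -/
def SigmaMat (μ : Measure Ω) (u : ℤ → Ω → (Fin n → ℝ)) : Matrix (Fin n) (Fin n) ℝ :=
  Matrix.of fun a b => ∫ ω, u 0 ω a * u 0 ω b ∂μ

/-- Sample matrix `T^{−1} Σ_{t=1}^T X_t X_t'` scaled by `G⁻¹` on both sides. -/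
def scaledXX (p : ℕ) (y : ℤ → Ω → (Fin n → ℝ)) (ρ : Fin n → ℝ) (ε : ℝ) (T : ℕ) (ω : Ω) :
    Matrix (Fin p × Fin n) (Fin p × Fin n) ℝ :=
  (Gmat p ρ T ε)⁻¹ * ((T : ℝ)⁻¹ • Matrix.of fun q r =>
      sumT T 0 fun t => Xt p y t ω q * Xt p y t ω r) * (Gmat p ρ T ε)⁻¹

/-- Standard normal CDF. -/
def stdNormalCDF (x : ℝ) : ℝ :=
  ∫ t in Set.Iic x, (Real.sqrt (2 * Real.pi))⁻¹ * Real.exp (-(t ^ 2) / 2)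

/-- Standard normal quantile. -/
def normalQuantile (q : ℝ) : ℝ := sInf {x : ℝ | q ≤ stdNormalCDF x}

/-- Convergence in probability to a constant. -/
def TendstoInProb (μ : Measure Ω) (X : ℕ → Ω → ℝ) (c : ℝ) : Prop :=
  ∀ η : ℝ, 0 < η →
    Tendsto (fun T => (μ {ω | η ≤ |X T ω - c|}).toReal) atTop (𝓝 0)

end LP

section Aux
open MeasureTheory Finset Matrix

-- Cauchy-Schwarz for dot products
lemma dot_sq_le {n : ℕ} (v x : Fin n → ℝ) :
    (v ⬝ᵥ x) ^ 2 ≤ (∑ a, v a ^ 2) * (∑ a, x a ^ 2) := by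
  simpa [dotProduct] using Finset.sum_mul_sq_le_sq_mul_sq Finset.univ v x

-- pointwise AM-GM helpers
lemma amgm_pair (a b : ℝ) : a * b ≤ (a ^ 2 + b ^ 2) / 2 := by nlinarith [sq_nonneg (a - b)]

lemma amgm4 (x y z : ℝ) (hx : 0 ≤ x) (hy : 0 ≤ y) (hz : 0 ≤ z) :
    x * y * z ^ 2 ≤ (x ^ 4 + y ^ 4 + 2 * z ^ 4) / 4 := by
  nlinarith [sq_nonneg (x * y - z ^ 2), sq_nonneg (x ^ 2 - y ^ 2), sq_nonneg (x - y),
    mul_nonneg hx hy, sq_nonneg (x + y), mul_nonneg (mul_nonneg hx hy) (sq_nonneg (x - y)),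
    sq_nonneg z]

lemma sq_le_one_add_pow4 (y : ℝ) : y ^ 2 ≤ 1 + y ^ 4 := by nlinarith [sq_nonneg (y ^ 2 - 1)]

lemma self_le_one_add_pow4 (y : ℝ) (hy : 0 ≤ y) : y ≤ 1 + y ^ 4 := by
  nlinarith [sq_nonneg (y ^ 2 - 1), sq_nonneg (y - 1), sq_nonneg y, sq_nonneg (y^2 - y)]

-- product of at most 8 nonneg reals
lemma prod_le_sum_eight {m : ℕ} (hm1 : 0 < m) (hm : m ≤ 8) (a : Fin m → ℝ)
    (ha : ∀ i, 0 ≤ a i) : ∏ i, a i ≤ ∑ i, (1 + a i ^ 8) := by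
  haveI : Nonempty (Fin m) := Fin.pos_iff_nonempty.mp hm1
  set M : ℝ := Finset.univ.sup' Finset.univ_nonempty (fun i => max (a i) 1) with hM
  have h1 : (1 : ℝ) ≤ M := by
    refine le_trans (le_max_right (a (Classical.arbitrary _)) 1) ?_
    exact Finset.le_sup' (fun i => max (a i) 1) (Finset.mem_univ _)
  have hai : ∀ i, a i ≤ M := fun i => by
    refine le_trans (le_max_left (a i) 1) ?_
    exact Finset.le_sup' (fun i => max (a i) 1) (Finset.mem_univ i)
  have h2 : ∏ i, a i ≤ M ^ m := by
    calc ∏ i, a i ≤ ∏ _i : Fin m, M := Finset.prod_le_prod (fun i _ => ha i) (fun i _ => hai i)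
    _ = M ^ m := by simp [Finset.prod_const]
  have h3 : M ^ m ≤ M ^ 8 := pow_le_pow_right₀ h1 hm
  obtain ⟨j, -, hj⟩ := Finset.exists_mem_eq_sup' Finset.univ_nonempty (fun i => max (a i) 1)
  have h4 : M ^ 8 ≤ 1 + a j ^ 8 := by
    rw [hM, hj]
    rcases max_cases (a j) 1 with ⟨h5, h6⟩ | ⟨h5, h6⟩ <;> rw [h5]
    · nlinarith [pow_nonneg (ha j) 8]
    · have : (1:ℝ) ≤ a j ^ 8 ∨ (0:ℝ) ≤ a j ^ 8 := Or.inr (pow_nonneg (ha j) 8)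
      nlinarith [pow_nonneg (ha j) 8]
  have h5 : 1 + a j ^ 8 ≤ ∑ i, (1 + a i ^ 8) :=
    Finset.single_le_sum (f := fun i => 1 + a i ^ 8) (fun i _ => by positivity)
      (Finset.mem_univ j)
  linarith

end Aux
section Aux2
open MeasureTheory Finset Matrix LP

lemma rayleigh_eq_image {n : ℕ} (M : Matrix (Fin n) (Fin n) ℝ) :
    {r : ℝ | ∃ x : Fin n → ℝ, (∑ i, (x i) ^ 2) = 1 ∧ r = x ⬝ᵥ M.mulVec x}
      = (fun x : Fin n → ℝ => x ⬝ᵥ M.mulVec x) '' {x | ∑ i, (x i) ^ 2 = 1} := by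
  ext r; simp [Set.mem_image, eq_comm, and_comm]

lemma isCompact_sphere' (n : ℕ) : IsCompact {x : Fin n → ℝ | ∑ i, (x i) ^ 2 = 1} := by
  refine IsCompact.of_isClosed_subset (isCompact_closedBall (0 : Fin n → ℝ) 1) ?_ ?_
  · have hc : Continuous fun x : Fin n → ℝ => ∑ i, (x i) ^ 2 := by
      exact continuous_finset_sum _ fun i _ => (continuous_apply i).pow 2
    exact isClosed_singleton.preimage hc
  · intro x hx
    simp only [Metric.mem_closedBall, dist_zero_right]
    rw [pi_norm_le_iff_of_nonneg zero_le_one]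
    intro i
    have h1 : (x i) ^ 2 ≤ 1 := by
      have := Finset.single_le_sum (f := fun i => (x i) ^ 2) (fun i _ => sq_nonneg _)
        (Finset.mem_univ i)
      simpa [hx] using this.trans_eq hx
    rw [Real.norm_eq_abs]
    nlinarith [abs_nonneg (x i), sq_abs (x i)]

lemma bddBelow_rayleigh {n : ℕ} (M : Matrix (Fin n) (Fin n) ℝ) :
    BddBelow {r : ℝ | ∃ x : Fin n → ℝ, (∑ i, (x i) ^ 2) = 1 ∧ r = x ⬝ᵥ M.mulVec x} := by
  rw [rayleigh_eq_image]
  have hc : Continuous fun x : Fin n → ℝ => x ⬝ᵥ M.mulVec x := by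
    simp only [dotProduct, Matrix.mulVec]
    exact continuous_finset_sum _ fun i _ => (continuous_apply i).mul
      (continuous_finset_sum _ fun j _ => continuous_const.mul (continuous_apply j))
  exact ((isCompact_sphere' n).image hc).bddBelow

lemma lammin_le_quad {n : ℕ} (M : Matrix (Fin n) (Fin n) ℝ) (x : Fin n → ℝ)
    (hx : (∑ i, (x i) ^ 2) = 1) : lammin M ≤ x ⬝ᵥ M.mulVec x :=
  csInf_le (bddBelow_rayleigh M) ⟨x, hx, rfl⟩

lemma le_lammin {n : ℕ} (hn : 0 < n) (M : Matrix (Fin n) (Fin n) ℝ) (c : ℝ)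
    (h : ∀ x : Fin n → ℝ, (∑ i, (x i) ^ 2) = 1 → c ≤ x ⬝ᵥ M.mulVec x) : c ≤ lammin M := by
  refine le_csInf ⟨_, ⟨Pi.single ⟨0, hn⟩ 1, ?_, rfl⟩⟩ ?_
  · simp [Pi.single_apply, sq]
  · rintro r ⟨x, hx, rfl⟩; exact h x hx

lemma quad_ge_of_le_lammin {n : ℕ} {M : Matrix (Fin n) (Fin n) ℝ} {c : ℝ}
    (hM : c ≤ lammin M) (x : Fin n → ℝ) : c * (∑ i, (x i) ^ 2) ≤ x ⬝ᵥ M.mulVec x := by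
  rcases eq_or_lt_of_le (Finset.sum_nonneg (fun i _ => sq_nonneg (x i))) with h0 | hpos
  · have hx0 : x = 0 := by
      funext i
      have := (Finset.sum_eq_zero_iff_of_nonneg (fun i _ => sq_nonneg (x i))).mp h0.symm i
        (Finset.mem_univ i)
      exact pow_eq_zero_iff (n := 2) (by norm_num) |>.mp this
    simp [hx0, ← h0]
  · set S : ℝ := ∑ i, (x i) ^ 2 with hS
    have hSpos : 0 < S := hpos
    set y : Fin n → ℝ := (Real.sqrt S)⁻¹ • x with hy
    have hsq : Real.sqrt S ^ 2 = S := Real.sq_sqrt hSpos.le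
    have hsne : Real.sqrt S ≠ 0 := by positivity
    have hy1 : (∑ i, (y i) ^ 2) = 1 := by
      simp only [hy, Pi.smul_apply, smul_eq_mul, mul_pow, ← Finset.mul_sum]
      field_simp
      rw [hsq, hS]
    have h2 : c ≤ y ⬝ᵥ M.mulVec y := le_trans hM (lammin_le_quad M y hy1)
    have h3 : y ⬝ᵥ M.mulVec y = (Real.sqrt S)⁻¹ * ((Real.sqrt S)⁻¹ * (x ⬝ᵥ M.mulVec x)) := by
      rw [hy, Matrix.mulVec_smul, smul_dotProduct, dotProduct_smul]
      simp [smul_eq_mul, mul_assoc]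
    rw [h3] at h2
    have h4 : (Real.sqrt S)⁻¹ * ((Real.sqrt S)⁻¹ * (x ⬝ᵥ M.mulVec x)) = (x ⬝ᵥ M.mulVec x) / S := by
      rw [← mul_assoc, ← mul_inv, ← sq, hsq, div_eq_inv_mul]
    rw [h4, le_div_iff₀ hSpos] at h2
    linarith
end Aux2
section Aux3
open MeasureTheory Finset Matrix LP

variable {Ω : Type} [MeasurableSpace Ω] {μ : Measure Ω} [IsProbabilityMeasure μ]
  {n : ℕ} {u : ℤ → Ω → (Fin n → ℝ)}

lemma measurable_dot (hu_meas : ∀ t, Measurable (u t)) (v : Fin n → ℝ) (s : ℤ) :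
    Measurable (fun ω => v ⬝ᵥ u s ω) := by
  simp only [dotProduct]
  exact Finset.measurable_sum _ fun a _ =>
    measurable_const.mul ((measurable_pi_apply a).comp (hu_meas s))

lemma sigmaGen_le (hu_meas : ∀ t, Measurable (u t)) (S : Set ℤ) :
    sigmaGen u S ≤ ‹MeasurableSpace Ω› :=
  iSup₂_le fun s _ => (hu_meas s).comap_le

lemma measurable_dot_sigmaGen (S : Set ℤ) {s : ℤ} (hs : s ∈ S) (v : Fin n → ℝ) :
    Measurable[sigmaGen u S] (fun ω => v ⬝ᵥ u s ω) := by
  have hus : Measurable[sigmaGen u S] (u s) := by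
    rw [measurable_iff_comap_le]
    exact le_iSup₂ (f := fun (t : ℤ) (_ : t ∈ S) => MeasurableSpace.comap (u t) inferInstance) s hs
  simp only [dotProduct]
  exact Finset.measurable_sum _ fun a _ =>
    measurable_const.mul ((measurable_pi_apply a).comp hus)

/-- master integrability of products of up to 8 linear forms of the innovations -/
lemma integrable_prod_dot (hu_meas : ∀ t, Measurable (u t))
    (hmom8 : ∀ t : ℤ, Integrable (fun ω => (∑ a, (u t ω a) ^ 2) ^ 4) μ)
    {m : ℕ} (hm1 : 0 < m) (hm : m ≤ 8) (v : Fin m → Fin n → ℝ) (s : Fin m → ℤ) :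
    Integrable (fun ω => ∏ i, (v i ⬝ᵥ u (s i) ω)) μ := by
  have hmeas : Measurable (fun ω => ∏ i, (v i ⬝ᵥ u (s i) ω)) :=
    Finset.measurable_prod _ fun i _ => measurable_dot hu_meas (v i) (s i)
  have hg : Integrable
      (fun ω => ∑ i, (1 + ((∑ a, (v i a) ^ 2) ^ 4) * (∑ a, (u (s i) ω a) ^ 2) ^ 4)) μ := by
    refine integrable_finset_sum _ fun i _ => ?_
    exact (integrable_const 1).add ((hmom8 (s i)).const_mul _)
  refine Integrable.mono' hg hmeas.aestronglyMeasurable ?_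
  refine Filter.Eventually.of_forall fun ω => ?_
  rw [Real.norm_eq_abs, Finset.abs_prod]
  calc ∏ i, |v i ⬝ᵥ u (s i) ω| ≤ ∑ i, (1 + |v i ⬝ᵥ u (s i) ω| ^ 8) :=
        prod_le_sum_eight hm1 hm _ (fun i => abs_nonneg _)
    _ ≤ _ := by
        refine Finset.sum_le_sum fun i _ => ?_
        have h1 : |v i ⬝ᵥ u (s i) ω| ^ 8 = ((v i ⬝ᵥ u (s i) ω) ^ 2) ^ 4 := by
          rw [← sq_abs]; ring
        have h2 : (v i ⬝ᵥ u (s i) ω) ^ 2 ≤ (∑ a, (v i a) ^ 2) * (∑ a, (u (s i) ω a) ^ 2) :=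
          dot_sq_le _ _
        have h3 : (0:ℝ) ≤ (v i ⬝ᵥ u (s i) ω) ^ 2 := sq_nonneg _
        have h4 := pow_le_pow_left₀ h3 h2 4
        refine add_le_add_right ?_ 1
        rw [h1]
        calc ((v i ⬝ᵥ u (s i) ω) ^ 2) ^ 4
            ≤ ((∑ a, (v i a) ^ 2) * (∑ a, (u (s i) ω a) ^ 2)) ^ 4 := h4
          _ = (∑ a, (v i a) ^ 2) ^ 4 * (∑ a, (u (s i) ω a) ^ 2) ^ 4 := by ring
end Aux3
section Aux4
open MeasureTheory Finset Matrix LP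

variable {Ω : Type} [MeasurableSpace Ω] {μ : Measure Ω} [IsProbabilityMeasure μ]
  {n : ℕ} {u : ℤ → Ω → (Fin n → ℝ)}
  (hu_meas : ∀ t, Measurable (u t))
  (hmom8 : ∀ t : ℤ, Integrable (fun ω => (∑ a, (u t ω a) ^ 2) ^ 4) μ)

include hu_meas hmom8

lemma int1 (v1 : Fin n → ℝ) (s1 : ℤ) : Integrable (fun ω => v1 ⬝ᵥ u s1 ω) μ := by
  have := integrable_prod_dot hu_meas hmom8 (m := 1) one_pos (by norm_num) ![v1] ![s1]
  simpa using this

lemma int2 (v1 v2 : Fin n → ℝ) (s1 s2 : ℤ) :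
    Integrable (fun ω => (v1 ⬝ᵥ u s1 ω) * (v2 ⬝ᵥ u s2 ω)) μ := by
  have := integrable_prod_dot hu_meas hmom8 (m := 2) two_pos (by norm_num) ![v1, v2] ![s1, s2]
  simpa [Fin.prod_univ_two] using this

lemma int3 (v1 v2 v3 : Fin n → ℝ) (s1 s2 s3 : ℤ) :
    Integrable (fun ω => (v1 ⬝ᵥ u s1 ω) * (v2 ⬝ᵥ u s2 ω) * (v3 ⬝ᵥ u s3 ω)) μ := by
  have := integrable_prod_dot hu_meas hmom8 (m := 3) three_pos (by norm_num)
    ![v1, v2, v3] ![s1, s2, s3]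
  simpa [Fin.prod_univ_three] using this

lemma int4 (v1 v2 v3 v4 : Fin n → ℝ) (s1 s2 s3 s4 : ℤ) :
    Integrable (fun ω => (v1 ⬝ᵥ u s1 ω) * (v2 ⬝ᵥ u s2 ω) * (v3 ⬝ᵥ u s3 ω) * (v4 ⬝ᵥ u s4 ω)) μ := by
  have := integrable_prod_dot hu_meas hmom8 (m := 4) four_pos (by norm_num)
    ![v1, v2, v3, v4] ![s1, s2, s3, s4]
  simpa [Fin.prod_univ_four] using this

lemma int7 (v1 v2 v3 v4 v5 v6 v7 : Fin n → ℝ) (s1 s2 s3 s4 s5 s6 s7 : ℤ) :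
    Integrable (fun ω => (v1 ⬝ᵥ u s1 ω) * (v2 ⬝ᵥ u s2 ω) * (v3 ⬝ᵥ u s3 ω) * (v4 ⬝ᵥ u s4 ω)
      * (v5 ⬝ᵥ u s5 ω) * (v6 ⬝ᵥ u s6 ω) * (v7 ⬝ᵥ u s7 ω)) μ := by
  have := integrable_prod_dot hu_meas hmom8 (m := 7) (by norm_num) (by norm_num)
    ![v1, v2, v3, v4, v5, v6, v7] ![s1, s2, s3, s4, s5, s6, s7]
  simpa [Fin.prod_univ_seven] using this

lemma int8 (v1 v2 v3 v4 v5 v6 v7 v8 : Fin n → ℝ) (s1 s2 s3 s4 s5 s6 s7 s8 : ℤ) :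
    Integrable (fun ω => (v1 ⬝ᵥ u s1 ω) * (v2 ⬝ᵥ u s2 ω) * (v3 ⬝ᵥ u s3 ω) * (v4 ⬝ᵥ u s4 ω)
      * (v5 ⬝ᵥ u s5 ω) * (v6 ⬝ᵥ u s6 ω) * (v7 ⬝ᵥ u s7 ω) * (v8 ⬝ᵥ u s8 ω)) μ := by
  have := integrable_prod_dot hu_meas hmom8 (m := 8) (by norm_num) le_rfl
    ![v1, v2, v3, v4, v5, v6, v7, v8] ![s1, s2, s3, s4, s5, s6, s7, s8]
  simpa [Fin.prod_univ_eight] using this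

end Aux4
section Aux5
open MeasureTheory Finset Matrix LP

variable {Ω : Type} [MeasurableSpace Ω] {μ : Measure Ω} [IsProbabilityMeasure μ]
  {n : ℕ} {u : ℤ → Ω → (Fin n → ℝ)}
  (hu_meas : ∀ t, Measurable (u t))
  (hmom8 : ∀ t : ℤ, Integrable (fun ω => (∑ a, (u t ω a) ^ 2) ^ 4) μ)

include hu_meas hmom8

lemma integrable_u_vec (k : ℤ) : Integrable (u k) μ := by
  refine Integrable.mono' ((integrable_const 1).add (hmom8 k))
    (hu_meas k).aestronglyMeasurable ?_
  refine Filter.Eventually.of_forall fun ω => ?_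
  simp only [Pi.add_apply]
  have hS0 : (0:ℝ) ≤ ∑ b, (u k ω b) ^ 2 := Finset.sum_nonneg fun b _ => sq_nonneg _
  rw [pi_norm_le_iff_of_nonneg (by positivity)]
  intro a
  have h1 : ‖u k ω a‖ ^ 2 ≤ ∑ b, (u k ω b) ^ 2 := by
    rw [Real.norm_eq_abs, sq_abs]
    exact Finset.single_le_sum (f := fun b => (u k ω b) ^ 2) (fun b _ => sq_nonneg _)
      (Finset.mem_univ a)
  have h2 := self_le_one_add_pow4 _ hS0
  have h3 := sq_nonneg (‖u k ω a‖ - 1)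
  have h4 : (0:ℝ) ≤ (∑ b, (u k ω b) ^ 2) ^ 4 := by positivity
  have ht0 : (0:ℝ) ≤ ‖u k ω a‖ := norm_nonneg _
  nlinarith

/-- conditional-mean-independence kills any integrable product with a lone innovation -/
lemma integral_mul_dot_eq_zero (hA1 : Assumption1 μ u) (k : ℤ) (v : Fin n → ℝ) (F : Ω → ℝ)
    (hF : StronglyMeasurable[sigmaGen u {s : ℤ | s ≠ k}] F)
    (hFv : Integrable (F * fun ω => v ⬝ᵥ u k ω) μ) :
    ∫ ω, F ω * (v ⬝ᵥ u k ω) ∂μ = 0 := by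
  have hm : sigmaGen u {s : ℤ | s ≠ k} ≤ ‹MeasurableSpace Ω› := sigmaGen_le hu_meas _
  haveI : SigmaFinite (μ.trim hm) := inferInstance
  have hg : Integrable (fun ω => v ⬝ᵥ u k ω) μ := int1 hu_meas hmom8 v k
  have hIu : Integrable (u k) μ := integrable_u_vec hu_meas hmom8 k
  have hcond0 : μ[(fun ω => v ⬝ᵥ u k ω)|sigmaGen u {s : ℤ | s ≠ k}] =ᵐ[μ] 0 := by
    refine (ae_eq_condExp_of_forall_setIntegral_eq hm hg
      (fun s _ _ => integrableOn_zero) (fun s hs hμs => ?_)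
      stronglyMeasurable_zero.aestronglyMeasurable).symm
    have hvec : ∫ x in s, u k x ∂μ = 0 := by
      rw [← setIntegral_condExp hm hIu hs]
      refine (setIntegral_congr_ae (hm s hs) ?_).trans (integral_zero _ _)
      filter_upwards [hA1 k] with ω h1 _
      exact h1
    have hcomp : ∀ a : Fin n, ∫ x in s, u k x a ∂μ = 0 := by
      intro a
      have := (ContinuousLinearMap.proj (R := ℝ) (φ := fun _ : Fin n => ℝ) a).integral_comp_comm
        (hIu.integrableOn (s := s))
      simp only [ContinuousLinearMap.proj_apply] at this
      rw [this, hvec]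
      simp
    rw [integral_zero]
    symm
    calc ∫ x in s, (v ⬝ᵥ u k x) ∂μ = ∫ x in s, ∑ a, v a * u k x a ∂μ := by
          simp [dotProduct]
      _ = ∑ a, ∫ x in s, v a * u k x a ∂μ := by
          refine integral_finset_sum _ fun a _ => ?_
          exact (((ContinuousLinearMap.proj (R := ℝ) (φ := fun _ : Fin n => ℝ) a).integrable_comp
            hIu).const_mul _).integrableOn
      _ = ∑ a, v a * ∫ x in s, u k x a ∂μ := by
          refine Finset.sum_congr rfl fun a _ => ?_
          exact integral_const_mul _ _
      _ = 0 := by simp [hcomp]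
  have hpull := condExp_mul_of_stronglyMeasurable_left hF hFv hg
  have h0 : μ[F * (fun ω => v ⬝ᵥ u k ω)|sigmaGen u {s : ℤ | s ≠ k}] =ᵐ[μ] 0 := by
    refine hpull.trans ?_
    filter_upwards [hcond0] with ω hω
    simp only [Pi.mul_apply, Pi.zero_apply, hω, mul_zero]
  have : ∫ ω, F ω * (v ⬝ᵥ u k ω) ∂μ
      = ∫ ω, (μ[F * (fun ω => v ⬝ᵥ u k ω)|sigmaGen u {s : ℤ | s ≠ k}]) ω ∂μ :=
    (integral_condExp hm).symm
  rw [this, integral_congr_ae h0]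
  simp
end Aux5
section Aux6
open MeasureTheory Finset Matrix LP

variable {Ω : Type} [MeasurableSpace Ω] {μ : Measure Ω} [IsProbabilityMeasure μ]
  {n : ℕ} {u : ℤ → Ω → (Fin n → ℝ)}
  (hu_meas : ∀ t, Measurable (u t))
  (hmom8 : ∀ t : ℤ, Integrable (fun ω => (∑ a, (u t ω a) ^ 2) ^ 4) μ)

lemma single_dot (a : Fin n) (x : Fin n → ℝ) : (Pi.single a 1 : Fin n → ℝ) ⬝ᵥ x = x a := by
  simp [dotProduct, Pi.single_apply]

include hu_meas hmom8

lemma int_entry (a b : Fin n) (k : ℤ) : Integrable (fun ω => u k ω a * u k ω b) μ := by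
  have := int2 hu_meas hmom8 (Pi.single a 1) (Pi.single b 1) k k
  simpa [single_dot] using this

lemma integral_mul_dot_sq_ge {δ : ℝ} (k : ℤ)
    (hck : ∀ᵐ ω ∂μ, δ ≤ lammin (condSecondMoment μ u k ω))
    (β : Fin n → ℝ) (F : Ω → ℝ)
    (hF : StronglyMeasurable[sigmaGen u {s : ℤ | s < k}] F)
    (hF0 : 0 ≤ᵐ[μ] F) (hFint : Integrable F μ)
    (hFab : ∀ a b : Fin n, Integrable (fun ω => F ω * (u k ω a * u k ω b)) μ) :
    δ * (∑ a, β a ^ 2) * ∫ ω, F ω ∂μ ≤ ∫ ω, F ω * (β ⬝ᵥ u k ω) ^ 2 ∂μ := by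
  have hm : sigmaGen u {s : ℤ | s < k} ≤ ‹MeasurableSpace Ω› := sigmaGen_le hu_meas _
  haveI : SigmaFinite (μ.trim hm) := inferInstance
  have hab : ∀ a b : Fin n, Integrable (fun ω => u k ω a * u k ω b) μ :=
    fun a b => int_entry hu_meas hmom8 a b k
  have hpull : ∀ a b : Fin n,
      μ[(fun ω => F ω * (u k ω a * u k ω b))|sigmaGen u {s : ℤ | s < k}]
        =ᵐ[μ] F * μ[(fun ω => u k ω a * u k ω b)|sigmaGen u {s : ℤ | s < k}] :=
    fun a b => condExp_mul_of_stronglyMeasurable_left hF (hFab a b) (hab a b)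
  have hC_int : ∀ a b : Fin n, Integrable
      (fun ω => F ω * (μ[(fun ω' => u k ω' a * u k ω' b)|sigmaGen u {s : ℤ | s < k}]) ω) μ :=
    fun a b => (integrable_condExp).congr (hpull a b)
  -- step 1: expand the square
  have hpt : ∀ ω, F ω * (β ⬝ᵥ u k ω) ^ 2
      = ∑ a, ∑ b, β a * β b * (F ω * (u k ω a * u k ω b)) := by
    intro ω
    simp only [dotProduct]
    rw [sq, Finset.sum_mul_sum, Finset.mul_sum]
    refine Finset.sum_congr rfl fun a _ => ?_
    rw [Finset.mul_sum]
    refine Finset.sum_congr rfl fun b _ => ?_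
    ring
  have step1 : ∫ ω, F ω * (β ⬝ᵥ u k ω) ^ 2 ∂μ
      = ∑ a, ∑ b, β a * β b * ∫ ω, F ω * (u k ω a * u k ω b) ∂μ := by
    rw [integral_congr_ae (Filter.Eventually.of_forall hpt)]
    rw [integral_finset_sum _ (fun a _ => integrable_finset_sum _
      (fun b _ => (hFab a b).const_mul _))]
    refine Finset.sum_congr rfl fun a _ => ?_
    rw [integral_finset_sum _ (fun b _ => (hFab a b).const_mul _)]
    exact Finset.sum_congr rfl fun b _ => integral_const_mul _ _
  have step2 : ∀ a b : Fin n, ∫ ω, F ω * (u k ω a * u k ω b) ∂μ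
      = ∫ ω, F ω * (μ[(fun ω' => u k ω' a * u k ω' b)|sigmaGen u {s : ℤ | s < k}]) ω ∂μ := by
    intro a b
    rw [← integral_condExp hm (f := fun ω => F ω * (u k ω a * u k ω b))]
    exact integral_congr_ae (hpull a b)
  have step3 : ∑ a, ∑ b, β a * β b * ∫ ω, F ω *
        (μ[(fun ω' => u k ω' a * u k ω' b)|sigmaGen u {s : ℤ | s < k}]) ω ∂μ
      = ∫ ω, F ω * (β ⬝ᵥ (condSecondMoment μ u k ω).mulVec β) ∂μ := by
    have hpt2 : ∀ ω, F ω * (β ⬝ᵥ (condSecondMoment μ u k ω).mulVec β)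
        = ∑ a, ∑ b, β a * β b *
          (F ω * (μ[(fun ω' => u k ω' a * u k ω' b)|sigmaGen u {s : ℤ | s < k}]) ω) := by
      intro ω
      simp only [dotProduct, Matrix.mulVec, condSecondMoment, Matrix.of_apply]
      rw [Finset.mul_sum]
      refine Finset.sum_congr rfl fun a _ => ?_
      rw [Finset.mul_sum, Finset.mul_sum]
      refine Finset.sum_congr rfl fun b _ => ?_
      ring
    rw [integral_congr_ae (Filter.Eventually.of_forall hpt2)]
    rw [integral_finset_sum _ (fun a _ => integrable_finset_sum _
      (fun b _ => (hC_int a b).const_mul _))]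
    refine Finset.sum_congr rfl fun a _ => ?_
    rw [integral_finset_sum _ (fun b _ => (hC_int a b).const_mul _)]
    exact Finset.sum_congr rfl fun b _ => (integral_const_mul _ _).symm
  have hquad_int : Integrable (fun ω => F ω * (β ⬝ᵥ (condSecondMoment μ u k ω).mulVec β)) μ := by
    have hpt2 : (fun ω => F ω * (β ⬝ᵥ (condSecondMoment μ u k ω).mulVec β))
        = fun ω => ∑ a, ∑ b, β a * β b *
          (F ω * (μ[(fun ω' => u k ω' a * u k ω' b)|sigmaGen u {s : ℤ | s < k}]) ω) := by
      funext ω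
      simp only [dotProduct, Matrix.mulVec, condSecondMoment, Matrix.of_apply]
      rw [Finset.mul_sum]
      refine Finset.sum_congr rfl fun a _ => ?_
      rw [Finset.mul_sum, Finset.mul_sum]
      refine Finset.sum_congr rfl fun b _ => ?_
      ring
    rw [hpt2]
    exact integrable_finset_sum _ (fun a _ => integrable_finset_sum _
      (fun b _ => (hC_int a b).const_mul _))
  have step4 : ∫ ω, δ * (∑ a, β a ^ 2) * F ω ∂μ
      ≤ ∫ ω, F ω * (β ⬝ᵥ (condSecondMoment μ u k ω).mulVec β) ∂μ := by
    refine integral_mono_ae (hFint.const_mul _) hquad_int ?_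
    filter_upwards [hck, hF0] with ω h1 h2
    have hq := quad_ge_of_le_lammin h1 β
    calc δ * (∑ a, β a ^ 2) * F ω = F ω * (δ * ∑ a, β a ^ 2) := by ring
      _ ≤ F ω * (β ⬝ᵥ (condSecondMoment μ u k ω).mulVec β) :=
          mul_le_mul_of_nonneg_left hq h2
  calc δ * (∑ a, β a ^ 2) * ∫ ω, F ω ∂μ = ∫ ω, δ * (∑ a, β a ^ 2) * F ω ∂μ :=
        (integral_const_mul _ _).symm
    _ ≤ ∫ ω, F ω * (β ⬝ᵥ (condSecondMoment μ u k ω).mulVec β) ∂μ := step4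
    _ = ∑ a, ∑ b, β a * β b * ∫ ω, F ω *
          (μ[(fun ω' => u k ω' a * u k ω' b)|sigmaGen u {s : ℤ | s < k}]) ω ∂μ := step3.symm
    _ = ∑ a, ∑ b, β a * β b * ∫ ω, F ω * (u k ω a * u k ω b) ∂μ := by
        exact Finset.sum_congr rfl fun a _ => Finset.sum_congr rfl fun b _ => by rw [step2]
    _ = ∫ ω, F ω * (β ⬝ᵥ u k ω) ^ 2 ∂μ := step1.symm
end Aux6
section Aux7
open MeasureTheory Finset Matrix LP

variable {Ω : Type} [MeasurableSpace Ω] {μ : Measure Ω} [IsProbabilityMeasure μ]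
  {n : ℕ} {u : ℤ → Ω → (Fin n → ℝ)}
  (hu_meas : ∀ t, Measurable (u t))
  (hmom8 : ∀ t : ℤ, Integrable (fun ω => (∑ a, (u t ω a) ^ 2) ^ 4) μ)

lemma onept (hu_meas : ∀ t, Measurable (u t)) (hu_stat : StrictlyStationary μ u)
    (g : (Fin n → ℝ) → ℝ) (hg : Measurable g) (s t : ℤ) :
    ∫ ω, g (u s ω) ∂μ = ∫ ω, g (u t ω) ∂μ := by
  have key : ∀ r : ℤ, ∫ ω, g (u r ω) ∂μ = ∫ ω, g (u 0 ω) ∂μ := by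
    intro r
    have h1 := hu_stat 1 r
    have hw : ∀ r' : ℤ, Measurable (fun ω => (fun j : Fin 1 => u (r' + (j : ℕ)) ω)) :=
      fun r' => measurable_pi_lambda _ fun j => hu_meas _
    have hw0 : Measurable (fun ω => (fun j : Fin 1 => u ((j : ℕ) : ℤ) ω)) :=
      measurable_pi_lambda _ fun j => hu_meas _
    have hG : Measurable (fun z : Fin 1 → Fin n → ℝ => g (z 0)) :=
      hg.comp (measurable_pi_apply 0)
    have e1 : ∫ ω, g (u r ω) ∂μ
        = ∫ ω, (fun z : Fin 1 → Fin n → ℝ => g (z 0)) ((fun j : Fin 1 => u (r + (j : ℕ)) ω)) ∂μ := by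
      simp
    have e2 : ∫ ω, g (u 0 ω) ∂μ
        = ∫ ω, (fun z : Fin 1 → Fin n → ℝ => g (z 0)) ((fun j : Fin 1 => u ((j : ℕ) : ℤ) ω)) ∂μ := by
      simp
    rw [e1, e2, ← integral_map (hw r).aemeasurable hG.aestronglyMeasurable,
      ← integral_map hw0.aemeasurable hG.aestronglyMeasurable, h1]
  rw [key s, key t]

include hu_meas hmom8

lemma dot_SigmaMat (w : Fin n → ℝ) :
    w ⬝ᵥ (SigmaMat μ u).mulVec w = ∫ ω, (w ⬝ᵥ u 0 ω) ^ 2 ∂μ := by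
  have hpt : ∀ ω, (w ⬝ᵥ u 0 ω) ^ 2 = ∑ a, ∑ b, w a * w b * (u 0 ω a * u 0 ω b) := by
    intro ω
    simp only [dotProduct]
    rw [sq, Finset.sum_mul_sum]
    refine Finset.sum_congr rfl fun a _ => ?_
    refine Finset.sum_congr rfl fun b _ => ?_
    ring
  rw [integral_congr_ae (Filter.Eventually.of_forall hpt)]
  rw [integral_finset_sum _ (fun a _ => integrable_finset_sum _
    (fun b _ => (int_entry hu_meas hmom8 a b 0).const_mul _))]
  simp only [dotProduct, Matrix.mulVec, SigmaMat, Matrix.of_apply]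
  refine Finset.sum_congr rfl fun a _ => ?_
  rw [integral_finset_sum _ (fun b _ => (int_entry hu_meas hmom8 a b 0).const_mul _),
    Finset.mul_sum]
  refine Finset.sum_congr rfl fun b _ => ?_
  rw [integral_const_mul]
  ring

lemma delta_le_lammin_Sigma (hn : 0 < n) {δ : ℝ}
    (hck : ∀ᵐ ω ∂μ, δ ≤ lammin (condSecondMoment μ u 0 ω)) :
    δ ≤ lammin (SigmaMat μ u) := by
  refine le_lammin hn _ _ fun x hx => ?_
  rw [dot_SigmaMat hu_meas hmom8 x]
  have h := integral_mul_dot_sq_ge hu_meas hmom8 0 hck x (fun _ => (1:ℝ))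
    stronglyMeasurable_const (Filter.Eventually.of_forall fun _ => zero_le_one)
    (integrable_const 1) (fun a b => by simpa using int_entry hu_meas hmom8 a b 0)
  simp only [hx, mul_one, one_mul] at h
  simpa using h
end Aux7
section Aux8
open MeasureTheory Finset Matrix LP

lemma sum3_rev (s : Finset ℕ) (F : ℕ → ℕ → ℕ → ℝ) :
    ∑ a ∈ s, ∑ b ∈ s, ∑ c ∈ s, F a b c = ∑ c ∈ s, ∑ b ∈ s, ∑ a ∈ s, F a b c :=
  calc ∑ a ∈ s, ∑ b ∈ s, ∑ c ∈ s, F a b c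
      = ∑ b ∈ s, ∑ a ∈ s, ∑ c ∈ s, F a b c := Finset.sum_comm
    _ = ∑ b ∈ s, ∑ c ∈ s, ∑ a ∈ s, F a b c :=
        Finset.sum_congr rfl fun b _ => Finset.sum_comm
    _ = ∑ c ∈ s, ∑ b ∈ s, ∑ a ∈ s, F a b c := Finset.sum_comm

lemma sum4_rev (s : Finset ℕ) (F : ℕ → ℕ → ℕ → ℕ → ℝ) :
    ∑ a ∈ s, ∑ b ∈ s, ∑ c ∈ s, ∑ d ∈ s, F a b c d
      = ∑ d ∈ s, ∑ c ∈ s, ∑ b ∈ s, ∑ a ∈ s, F a b c d :=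
  calc ∑ a ∈ s, ∑ b ∈ s, ∑ c ∈ s, ∑ d ∈ s, F a b c d
      = ∑ b ∈ s, ∑ a ∈ s, ∑ c ∈ s, ∑ d ∈ s, F a b c d := Finset.sum_comm
    _ = ∑ b ∈ s, ∑ d ∈ s, ∑ c ∈ s, ∑ a ∈ s, F a b c d :=
        Finset.sum_congr rfl fun b _ => sum3_rev s (fun a c d => F a b c d)
    _ = ∑ d ∈ s, ∑ b ∈ s, ∑ c ∈ s, ∑ a ∈ s, F a b c d := Finset.sum_comm
    _ = ∑ d ∈ s, ∑ c ∈ s, ∑ b ∈ s, ∑ a ∈ s, F a b c d :=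
        Finset.sum_congr rfl fun d _ => Finset.sum_comm

lemma expand_sq_mul (s : Finset ℕ) (f : ℕ → ℝ) (x : ℝ) :
    (∑ i ∈ s, f i) ^ 2 * x = ∑ i ∈ s, ∑ j ∈ s, f i * f j * x := by
  conv_lhs => rw [pow_two]
  simp only [Finset.sum_mul, Finset.mul_sum]
  rw [Finset.sum_comm]

lemma expand_cube_mul (s : Finset ℕ) (f : ℕ → ℝ) (x : ℝ) :
    (∑ i ∈ s, f i) ^ 3 * x = ∑ i ∈ s, ∑ j ∈ s, ∑ k ∈ s, f i * f j * f k * x := by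
  conv_rhs => rw [sum3_rev s (fun i j k => f i * f j * f k * x)]
  rw [pow_succ, pow_two]
  simp only [Finset.sum_mul, Finset.mul_sum]

lemma expand_pow4 (s : Finset ℕ) (f : ℕ → ℝ) :
    (∑ i ∈ s, f i) ^ 4 = ∑ i ∈ s, ∑ j ∈ s, ∑ k ∈ s, ∑ l ∈ s, f i * f j * f k * f l := by
  conv_rhs => rw [sum4_rev s (fun i j k l => f i * f j * f k * f l)]
  rw [pow_succ, pow_succ, pow_two]
  simp only [Finset.sum_mul, Finset.mul_sum]

end Aux8
section Aux9
open MeasureTheory Finset Matrix LP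

variable {Ω : Type} [MeasurableSpace Ω] {μ : Measure Ω}

lemma second_moment_sum (q : ℕ → Ω → ℝ) (h : ℕ)
    (hint : ∀ ℓ j, ℓ < h → j < h → Integrable (fun ω => q ℓ ω * q j ω) μ)
    (hvan : ∀ ℓ j, ℓ < h → j < h → j ≠ ℓ → ∫ ω, q ℓ ω * q j ω ∂μ = 0) :
    ∫ ω, (∑ ℓ ∈ Finset.range h, q ℓ ω) ^ 2 ∂μ
      = ∑ ℓ ∈ Finset.range h, ∫ ω, q ℓ ω * q ℓ ω ∂μ := by
  have hpt : ∀ ω, (∑ ℓ ∈ Finset.range h, q ℓ ω) ^ 2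
      = ∑ ℓ ∈ Finset.range h, ∑ j ∈ Finset.range h, q ℓ ω * q j ω := by
    intro ω; rw [sq, Finset.sum_mul_sum]
  rw [integral_congr_ae (Filter.Eventually.of_forall hpt)]
  rw [integral_finset_sum _ (fun ℓ hℓ => integrable_finset_sum _
    (fun j hj => hint ℓ j (Finset.mem_range.mp hℓ) (Finset.mem_range.mp hj)))]
  refine Finset.sum_congr rfl fun ℓ hℓ => ?_
  rw [integral_finset_sum _ (fun j hj => hint ℓ j (Finset.mem_range.mp hℓ)
    (Finset.mem_range.mp hj))]
  refine Finset.sum_eq_single ℓ (fun j hj hne => hvan ℓ j (Finset.mem_range.mp hℓ)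
    (Finset.mem_range.mp hj) hne) (fun hℓ' => absurd hℓ hℓ')

lemma fourth_moment_bound (q : ℕ → Ω → ℝ) (c : ℕ → ℝ) :
    ∀ h : ℕ, (∀ ℓ, ℓ < h → 0 ≤ c ℓ) →
    (∀ ℓ j k l, ℓ < h → j < h → k < h → l < h →
      Integrable (fun ω => q ℓ ω * q j ω * q k ω * q l ω) μ) →
    (∀ ℓ j k l, ℓ < h → j < h → k < h → l < h → l ≠ ℓ → l ≠ j → l ≠ k →
      ∫ ω, q ℓ ω * q j ω * q k ω * q l ω ∂μ = 0) →
    (∀ ℓ, ℓ < h → ∫ ω, q ℓ ω * q ℓ ω * q ℓ ω * q ℓ ω ∂μ ≤ c ℓ * c ℓ) →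
    (∀ ℓ j, ℓ < h → j < h → ∫ ω, q ℓ ω * q ℓ ω * q j ω * q j ω ∂μ ≤ c ℓ * c j) →
    ∫ ω, (∑ ℓ ∈ Finset.range h, q ℓ ω) ^ 4 ∂μ ≤ 3 * (∑ ℓ ∈ Finset.range h, c ℓ) ^ 2 := by
  intro h
  induction h with
  | zero => intro _ _ _ _ _; simp
  | succ h IH =>
    intro hc hint hvan hdiag hpair
    have hlt : ∀ {a : ℕ}, a < h → a < h + 1 := fun ha => Nat.lt_succ_of_lt ha
    have hh : h < h + 1 := Nat.lt_succ_self h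
    have IH' := IH (fun ℓ hℓ => hc ℓ (hlt hℓ))
      (fun ℓ j k l h1 h2 h3 h4 => hint ℓ j k l (hlt h1) (hlt h2) (hlt h3) (hlt h4))
      (fun ℓ j k l h1 h2 h3 h4 => hvan ℓ j k l (hlt h1) (hlt h2) (hlt h3) (hlt h4))
      (fun ℓ hℓ => hdiag ℓ (hlt hℓ))
      (fun ℓ j h1 h2 => hpair ℓ j (hlt h1) (hlt h2))
    set S : Ω → ℝ := fun ω => ∑ ℓ ∈ Finset.range h, q ℓ ω with hS
    -- integrability of the five pieces
    have I1 : Integrable (fun ω => S ω ^ 4) μ := by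
      have : (fun ω => S ω ^ 4) = fun ω => ∑ ℓ ∈ Finset.range h, ∑ j ∈ Finset.range h,
          ∑ k ∈ Finset.range h, ∑ l ∈ Finset.range h, q ℓ ω * q j ω * q k ω * q l ω := by
        funext ω; exact expand_pow4 _ _
      rw [this]
      refine integrable_finset_sum _ fun ℓ hℓ => integrable_finset_sum _ fun j hj =>
        integrable_finset_sum _ fun k hk => integrable_finset_sum _ fun l hl => ?_
      exact hint ℓ j k l (hlt (Finset.mem_range.mp hℓ)) (hlt (Finset.mem_range.mp hj))
        (hlt (Finset.mem_range.mp hk)) (hlt (Finset.mem_range.mp hl))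
    have I2 : Integrable (fun ω => S ω ^ 3 * q h ω) μ := by
      have : (fun ω => S ω ^ 3 * q h ω) = fun ω => ∑ ℓ ∈ Finset.range h, ∑ j ∈ Finset.range h,
          ∑ k ∈ Finset.range h, q ℓ ω * q j ω * q k ω * q h ω := by
        funext ω; exact expand_cube_mul _ _ _
      rw [this]
      refine integrable_finset_sum _ fun ℓ hℓ => integrable_finset_sum _ fun j hj =>
        integrable_finset_sum _ fun k hk => ?_
      exact hint ℓ j k h (hlt (Finset.mem_range.mp hℓ)) (hlt (Finset.mem_range.mp hj))
        (hlt (Finset.mem_range.mp hk)) hh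
    have e3 : (fun ω => S ω ^ 2 * q h ω ^ 2) = fun ω => ∑ ℓ ∈ Finset.range h,
        ∑ j ∈ Finset.range h, q ℓ ω * q j ω * q h ω * q h ω := by
      funext ω
      rw [show S ω ^ 2 * q h ω ^ 2 = S ω ^ 2 * (q h ω ^ 2) from rfl, expand_sq_mul]
      exact Finset.sum_congr rfl fun ℓ _ => Finset.sum_congr rfl fun j _ => by ring
    have I3 : Integrable (fun ω => S ω ^ 2 * q h ω ^ 2) μ := by
      rw [e3]
      refine integrable_finset_sum _ fun ℓ hℓ => integrable_finset_sum _ fun j hj => ?_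
      exact hint ℓ j h h (hlt (Finset.mem_range.mp hℓ)) (hlt (Finset.mem_range.mp hj)) hh hh
    have e4 : (fun ω => S ω * q h ω ^ 3) = fun ω => ∑ ℓ ∈ Finset.range h,
        q ℓ ω * q h ω * q h ω * q h ω := by
      funext ω
      rw [show S ω * q h ω ^ 3 = S ω * (q h ω ^ 3) from rfl, Finset.sum_mul]
      exact Finset.sum_congr rfl fun ℓ _ => by ring
    have I4 : Integrable (fun ω => S ω * q h ω ^ 3) μ := by
      rw [e4]
      refine integrable_finset_sum _ fun ℓ hℓ => ?_
      exact hint ℓ h h h (hlt (Finset.mem_range.mp hℓ)) hh hh hh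
    have I5 : Integrable (fun ω => q h ω * q h ω * q h ω * q h ω) μ := hint h h h h hh hh hh hh
    -- values of the cross terms
    have T2 : ∫ ω, S ω ^ 3 * q h ω ∂μ = 0 := by
      rw [integral_congr_ae (Filter.Eventually.of_forall fun ω => expand_cube_mul
        (Finset.range h) (fun ℓ => q ℓ ω) (q h ω))]
      rw [integral_finset_sum _ (fun ℓ hℓ => integrable_finset_sum _ fun j hj =>
        integrable_finset_sum _ fun k hk => hint ℓ j k h (hlt (Finset.mem_range.mp hℓ))
          (hlt (Finset.mem_range.mp hj)) (hlt (Finset.mem_range.mp hk)) hh)]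
      refine Finset.sum_eq_zero fun ℓ hℓ => ?_
      rw [integral_finset_sum _ (fun j hj => integrable_finset_sum _ fun k hk =>
        hint ℓ j k h (hlt (Finset.mem_range.mp hℓ)) (hlt (Finset.mem_range.mp hj))
          (hlt (Finset.mem_range.mp hk)) hh)]
      refine Finset.sum_eq_zero fun j hj => ?_
      rw [integral_finset_sum _ (fun k hk => hint ℓ j k h (hlt (Finset.mem_range.mp hℓ))
        (hlt (Finset.mem_range.mp hj)) (hlt (Finset.mem_range.mp hk)) hh)]
      refine Finset.sum_eq_zero fun k hk => ?_
      exact hvan ℓ j k h (hlt (Finset.mem_range.mp hℓ)) (hlt (Finset.mem_range.mp hj))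
        (hlt (Finset.mem_range.mp hk)) hh (Nat.ne_of_gt (Finset.mem_range.mp hℓ))
        (Nat.ne_of_gt (Finset.mem_range.mp hj)) (Nat.ne_of_gt (Finset.mem_range.mp hk))
    have T4 : ∫ ω, S ω * q h ω ^ 3 ∂μ = 0 := by
      rw [show (fun ω => S ω * q h ω ^ 3) = fun ω => ∑ ℓ ∈ Finset.range h,
          q ℓ ω * q h ω * q h ω * q h ω from e4]
      rw [integral_finset_sum _ (fun ℓ hℓ => hint ℓ h h h (hlt (Finset.mem_range.mp hℓ))
        hh hh hh)]
      refine Finset.sum_eq_zero fun ℓ hℓ => ?_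
      have hℓh : ℓ < h := Finset.mem_range.mp hℓ
      have : ∫ ω, q ℓ ω * q h ω * q h ω * q h ω ∂μ
          = ∫ ω, q h ω * q h ω * q h ω * q ℓ ω ∂μ :=
        integral_congr_ae (Filter.Eventually.of_forall fun ω => by ring)
      rw [this]
      exact hvan h h h ℓ hh hh hh (hlt hℓh) (Nat.ne_of_lt hℓh) (Nat.ne_of_lt hℓh)
        (Nat.ne_of_lt hℓh)
    have T3 : ∫ ω, S ω ^ 2 * q h ω ^ 2 ∂μ
        ≤ (∑ ℓ ∈ Finset.range h, c ℓ) * c h := by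
      rw [show (fun ω => S ω ^ 2 * q h ω ^ 2) = _ from e3]
      rw [integral_finset_sum _ (fun ℓ hℓ => integrable_finset_sum _ fun j hj =>
        hint ℓ j h h (hlt (Finset.mem_range.mp hℓ)) (hlt (Finset.mem_range.mp hj)) hh hh)]
      rw [Finset.sum_mul]
      refine Finset.sum_le_sum fun ℓ hℓ => ?_
      have hℓh : ℓ < h := Finset.mem_range.mp hℓ
      rw [integral_finset_sum _ (fun j hj => hint ℓ j h h (hlt hℓh)
        (hlt (Finset.mem_range.mp hj)) hh hh)]
      have : ∑ j ∈ Finset.range h, ∫ ω, q ℓ ω * q j ω * q h ω * q h ω ∂μ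
          = ∫ ω, q ℓ ω * q ℓ ω * q h ω * q h ω ∂μ := by
        refine Finset.sum_eq_single ℓ (fun j hj hne => ?_) (fun hℓ' => absurd hℓ hℓ')
        have hjh : j < h := Finset.mem_range.mp hj
        have : ∫ ω, q ℓ ω * q j ω * q h ω * q h ω ∂μ
            = ∫ ω, q j ω * q h ω * q h ω * q ℓ ω ∂μ :=
          integral_congr_ae (Filter.Eventually.of_forall fun ω => by ring)
        rw [this]
        exact hvan j h h ℓ (hlt hjh) hh hh (hlt hℓh) (Ne.symm hne) (Nat.ne_of_lt hℓh)
          (Nat.ne_of_lt hℓh)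
      rw [this]
      exact hpair ℓ h (hlt hℓh) hh
    have T5 : ∫ ω, q h ω * q h ω * q h ω * q h ω ∂μ ≤ c h * c h := hdiag h hh
    -- assemble
    have hsplit : ∫ ω, (∑ ℓ ∈ Finset.range (h + 1), q ℓ ω) ^ 4 ∂μ
        = ∫ ω, (S ω ^ 4 + 4 * (S ω ^ 3 * q h ω) + 6 * (S ω ^ 2 * q h ω ^ 2)
            + 4 * (S ω * q h ω ^ 3) + q h ω * q h ω * q h ω * q h ω) ∂μ := by
      refine integral_congr_ae (Filter.Eventually.of_forall fun ω => ?_)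
      simp only [Finset.sum_range_succ]
      ring
    have J1 : Integrable (fun ω => S ω ^ 4 + 4 * (S ω ^ 3 * q h ω)) μ :=
      I1.add (I2.const_mul 4)
    have J2 : Integrable (fun ω => S ω ^ 4 + 4 * (S ω ^ 3 * q h ω)
        + 6 * (S ω ^ 2 * q h ω ^ 2)) μ := J1.add (I3.const_mul 6)
    have J3 : Integrable (fun ω => S ω ^ 4 + 4 * (S ω ^ 3 * q h ω)
        + 6 * (S ω ^ 2 * q h ω ^ 2) + 4 * (S ω * q h ω ^ 3)) μ := J2.add (I4.const_mul 4)
    rw [hsplit, integral_add J3 I5, integral_add J2 (I4.const_mul 4),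
      integral_add J1 (I3.const_mul 6), integral_add I1 (I2.const_mul 4),
      integral_const_mul 4, integral_const_mul 6, integral_const_mul 4, T2, T4]
    have hC0 : 0 ≤ ∑ ℓ ∈ Finset.range h, c ℓ :=
      Finset.sum_nonneg fun ℓ hℓ => hc ℓ (hlt (Finset.mem_range.mp hℓ))
    have hch0 : 0 ≤ c h := hc h hh
    rw [Finset.sum_range_succ]
    nlinarith [IH', T3, T5]
end Aux9
section Aux10
open MeasureTheory Finset Matrix LP

lemma bound_diag (q Y A X B XT : ℝ) (hq : q ^ 2 ≤ A * X) (hY : Y ^ 2 ≤ B * XT) :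
    q * Y * (q * Y) * (q * Y) * (q * Y) ≤ A ^ 2 * B ^ 2 * ((X ^ 4 + XT ^ 4) / 2) := by
  have hq2 : (0:ℝ) ≤ q ^ 2 := sq_nonneg q
  have hY2 : (0:ℝ) ≤ Y ^ 2 := sq_nonneg Y
  have hAX : (0:ℝ) ≤ A * X := le_trans hq2 hq
  have hBX : (0:ℝ) ≤ B * XT := le_trans hY2 hY
  have h1 : q ^ 2 * q ^ 2 ≤ (A * X) * (A * X) := mul_le_mul hq hq hq2 hAX
  have h2 : Y ^ 2 * Y ^ 2 ≤ (B * XT) * (B * XT) := mul_le_mul hY hY hY2 hBX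
  have h3 : (q ^ 2 * q ^ 2) * (Y ^ 2 * Y ^ 2) ≤ ((A * X) * (A * X)) * ((B * XT) * (B * XT)) :=
    mul_le_mul h1 h2 (by positivity) (mul_nonneg hAX hAX)
  have h4 : X ^ 2 * XT ^ 2 ≤ (X ^ 4 + XT ^ 4) / 2 := by nlinarith [sq_nonneg (X ^ 2 - XT ^ 2)]
  calc q * Y * (q * Y) * (q * Y) * (q * Y) = (q ^ 2 * q ^ 2) * (Y ^ 2 * Y ^ 2) := by ring
    _ ≤ ((A * X) * (A * X)) * ((B * XT) * (B * XT)) := h3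
    _ = (A ^ 2 * B ^ 2) * (X ^ 2 * XT ^ 2) := by ring
    _ ≤ A ^ 2 * B ^ 2 * ((X ^ 4 + XT ^ 4) / 2) :=
        mul_le_mul_of_nonneg_left h4 (by positivity)

lemma bound_pair (q1 q2 Y A1 X1 A2 X2 B XT : ℝ)
    (h1 : q1 ^ 2 ≤ A1 * X1) (h2 : q2 ^ 2 ≤ A2 * X2) (hY : Y ^ 2 ≤ B * XT)
    (hX1 : 0 ≤ X1) (hX2 : 0 ≤ X2) (hXT : 0 ≤ XT)
    (hA1n : 0 ≤ A1) (hA2n : 0 ≤ A2) (hBn : 0 ≤ B) :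
    q1 * Y * (q1 * Y) * (q2 * Y) * (q2 * Y)
      ≤ A1 * A2 * B ^ 2 * ((X1 ^ 4 + X2 ^ 4 + 2 * XT ^ 4) / 4) := by
  have hq1 : (0:ℝ) ≤ q1 ^ 2 := sq_nonneg q1
  have hq2 : (0:ℝ) ≤ q2 ^ 2 := sq_nonneg q2
  have hY2 : (0:ℝ) ≤ Y ^ 2 := sq_nonneg Y
  have hA1X : (0:ℝ) ≤ A1 * X1 := le_trans hq1 h1
  have hA2X : (0:ℝ) ≤ A2 * X2 := le_trans hq2 h2
  have hBX : (0:ℝ) ≤ B * XT := le_trans hY2 hY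
  have h3 : q1 ^ 2 * q2 ^ 2 ≤ (A1 * X1) * (A2 * X2) := mul_le_mul h1 h2 hq2 hA1X
  have h4 : Y ^ 2 * Y ^ 2 ≤ (B * XT) * (B * XT) := mul_le_mul hY hY hY2 hBX
  have h5 : (q1 ^ 2 * q2 ^ 2) * (Y ^ 2 * Y ^ 2)
      ≤ ((A1 * X1) * (A2 * X2)) * ((B * XT) * (B * XT)) :=
    mul_le_mul h3 h4 (by positivity) (mul_nonneg hA1X hA2X)
  have h6 : X1 * X2 * XT ^ 2 ≤ (X1 ^ 4 + X2 ^ 4 + 2 * XT ^ 4) / 4 := amgm4 _ _ _ hX1 hX2 hXT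
  calc q1 * Y * (q1 * Y) * (q2 * Y) * (q2 * Y) = (q1 ^ 2 * q2 ^ 2) * (Y ^ 2 * Y ^ 2) := by ring
    _ ≤ ((A1 * X1) * (A2 * X2)) * ((B * XT) * (B * XT)) := h5
    _ = (A1 * A2 * B ^ 2) * (X1 * X2 * XT ^ 2) := by ring
    _ ≤ _ := mul_le_mul_of_nonneg_left h6 (mul_nonneg (mul_nonneg hA1n hA2n) (sq_nonneg B))


lemma bound_diag_b (q A X : ℝ) (hq : q ^ 2 ≤ A * X) :
    q * q * q * q ≤ A ^ 2 * X ^ 2 := by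
  have hq2 : (0:ℝ) ≤ q ^ 2 := sq_nonneg q
  have hAX : (0:ℝ) ≤ A * X := le_trans hq2 hq
  calc q * q * q * q = q ^ 2 * q ^ 2 := by ring
    _ ≤ (A * X) * (A * X) := mul_le_mul hq hq hq2 hAX
    _ = A ^ 2 * X ^ 2 := by ring

lemma bound_pair_b (q1 q2 A1 X1 A2 X2 : ℝ)
    (h1 : q1 ^ 2 ≤ A1 * X1) (h2 : q2 ^ 2 ≤ A2 * X2)
    (hA1n : 0 ≤ A1) (hA2n : 0 ≤ A2) :
    q1 * q1 * q2 * q2 ≤ A1 * A2 * ((X1 ^ 2 + X2 ^ 2) / 2) := by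
  have hq1 : (0:ℝ) ≤ q1 ^ 2 := sq_nonneg q1
  have hq2 : (0:ℝ) ≤ q2 ^ 2 := sq_nonneg q2
  have hA1X : (0:ℝ) ≤ A1 * X1 := le_trans hq1 h1
  have h6 : X1 * X2 ≤ (X1 ^ 2 + X2 ^ 2) / 2 := amgm_pair _ _
  calc q1 * q1 * q2 * q2 = q1 ^ 2 * q2 ^ 2 := by ring
    _ ≤ (A1 * X1) * (A2 * X2) := mul_le_mul h1 h2 hq2 hA1X
    _ = (A1 * A2) * (X1 * X2) := by ring
    _ ≤ (A1 * A2) * ((X1 ^ 2 + X2 ^ 2) / 2) :=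
        mul_le_mul_of_nonneg_left h6 (mul_nonneg hA1n hA2n)

lemma irf_zero {n p : ℕ} (hp : 0 < p) (A : Fin p → Matrix (Fin n) (Fin n) ℝ) (i : Fin n) :
    (∑ a, (irf hp A 0 i a) ^ 2) = 1 := by
  have : ∀ b, irf hp A 0 i b = if i = b then 1 else 0 := by
    intro b
    simp only [irf, pow_zero, Matrix.one_apply, Prod.mk.injEq]
    by_cases hib : i = b <;> simp [hib]
  simp only [this]
  rw [Finset.sum_eq_single i] <;> simp
  intro b hbi
  simp [Ne.symm hbi]
end Aux10
section Aux11
open MeasureTheory Finset Matrix LP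

variable {Ω : Type} [MeasurableSpace Ω] {μ : Measure Ω} [IsProbabilityMeasure μ]
  {n p : ℕ} {u : ℤ → Ω → (Fin n → ℝ)}
  (hu_meas : ∀ t, Measurable (u t))
  (hmom8 : ∀ t : ℤ, Integrable (fun ω => (∑ a, (u t ω a) ^ 2) ^ 4) μ)

include hu_meas hmom8

/-- Lower bound for the denominator `v²`. -/
lemma denom_lb (hn : 0 < n) (hp : 0 < p) (hA1 : Assumption1 μ u) {δ : ℝ} (hδ : 0 < δ)
    (hcond : ∀ t : ℤ, ∀ᵐ ω ∂μ, δ ≤ lammin (condSecondMoment μ u t ω))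
    (A : Fin p → Matrix (Fin n) (Fin n) ℝ) (i : Fin n) (w : Fin n → ℝ) (h : ℕ) :
    δ * lammin (SigmaMat μ u) * (∑ a, w a ^ 2)
        * (∑ ℓ ∈ Finset.range h, ∑ a, (irf hp A (h - 1 - ℓ) i a) ^ 2)
      ≤ ∫ ω, (xi hp A h i u 0 ω) ^ 2 * (w ⬝ᵥ u 0 ω) ^ 2 ∂μ := by
  set lam := lammin (SigmaMat μ u) with hlam
  have hne0 : ∀ ℓ : ℕ, ((0:ℤ) + (ℓ:ℤ) + 1) ≠ 0 := by intro ℓ; omega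
  have hneq : ∀ ℓ l : ℕ, ℓ ≠ l → ((0:ℤ) + (ℓ:ℤ) + 1) ≠ ((0:ℤ) + (l:ℤ) + 1) := by
    intro ℓ l hne
    intro hcontra
    apply hne
    omega
  -- the summands
  have hpt : ∀ ω, (xi hp A h i u 0 ω) ^ 2 * (w ⬝ᵥ u 0 ω) ^ 2
      = (∑ ℓ ∈ Finset.range h,
          (irf hp A (h - 1 - ℓ) i ⬝ᵥ u ((0:ℤ) + (ℓ:ℤ) + 1) ω) * (w ⬝ᵥ u 0 ω)) ^ 2 := by
    intro ω
    simp only [xi]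
    rw [← Finset.sum_mul]
    ring
  rw [integral_congr_ae (Filter.Eventually.of_forall hpt)]
  -- expand the square of the sum
  have hint2 : ∀ ℓ j, ℓ < h → j < h → Integrable (fun ω =>
      ((irf hp A (h - 1 - ℓ) i ⬝ᵥ u ((0:ℤ) + (ℓ:ℤ) + 1) ω) * (w ⬝ᵥ u 0 ω))
        * ((irf hp A (h - 1 - j) i ⬝ᵥ u ((0:ℤ) + (j:ℤ) + 1) ω) * (w ⬝ᵥ u 0 ω))) μ := by
    intro ℓ j _ _
    have e : (fun ω =>
        ((irf hp A (h - 1 - ℓ) i ⬝ᵥ u ((0:ℤ) + (ℓ:ℤ) + 1) ω) * (w ⬝ᵥ u 0 ω))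
          * ((irf hp A (h - 1 - j) i ⬝ᵥ u ((0:ℤ) + (j:ℤ) + 1) ω) * (w ⬝ᵥ u 0 ω)))
        = fun ω => (irf hp A (h - 1 - ℓ) i ⬝ᵥ u ((0:ℤ) + (ℓ:ℤ) + 1) ω)
          * (irf hp A (h - 1 - j) i ⬝ᵥ u ((0:ℤ) + (j:ℤ) + 1) ω)
          * (w ⬝ᵥ u 0 ω) * (w ⬝ᵥ u 0 ω) := by
      funext ω; ring
    rw [e]
    exact int4 hu_meas hmom8 _ _ w w _ _ 0 0
  have hvan2 : ∀ ℓ j, ℓ < h → j < h → j ≠ ℓ → ∫ ω,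
      ((irf hp A (h - 1 - ℓ) i ⬝ᵥ u ((0:ℤ) + (ℓ:ℤ) + 1) ω) * (w ⬝ᵥ u 0 ω))
        * ((irf hp A (h - 1 - j) i ⬝ᵥ u ((0:ℤ) + (j:ℤ) + 1) ω) * (w ⬝ᵥ u 0 ω)) ∂μ = 0 := by
    intro ℓ j _ _ hne
    set kk : ℤ := (0:ℤ) + (j:ℤ) + 1 with hkk
    set F : Ω → ℝ := fun ω =>
      (irf hp A (h - 1 - ℓ) i ⬝ᵥ u ((0:ℤ) + (ℓ:ℤ) + 1) ω) * ((w ⬝ᵥ u 0 ω) * (w ⬝ᵥ u 0 ω))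
      with hF
    have hFmeas : StronglyMeasurable[sigmaGen u {s : ℤ | s ≠ kk}] F := by
      refine Measurable.stronglyMeasurable ?_
      refine Measurable.mul ?_ (Measurable.mul ?_ ?_)
      · exact measurable_dot_sigmaGen _ (by simp only [Set.mem_setOf_eq, hkk]; omega) _
      · exact measurable_dot_sigmaGen _ (by simp only [Set.mem_setOf_eq, hkk]; omega) _
      · exact measurable_dot_sigmaGen _ (by simp only [Set.mem_setOf_eq, hkk]; omega) _
    have hFv : Integrable (F * fun ω => irf hp A (h - 1 - j) i ⬝ᵥ u kk ω) μ := by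
      have e : (F * fun ω => irf hp A (h - 1 - j) i ⬝ᵥ u kk ω)
          = fun ω => (irf hp A (h - 1 - ℓ) i ⬝ᵥ u ((0:ℤ) + (ℓ:ℤ) + 1) ω)
            * (w ⬝ᵥ u 0 ω) * (w ⬝ᵥ u 0 ω) * (irf hp A (h - 1 - j) i ⬝ᵥ u kk ω) := by
        funext ω; simp only [Pi.mul_apply, hF]; ring
      rw [e]
      exact int4 hu_meas hmom8 _ w w _ _ 0 0 kk
    have hzero := integral_mul_dot_eq_zero hu_meas hmom8 hA1 kk
      (irf hp A (h - 1 - j) i) F hFmeas hFv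
    rw [← hzero]
    refine integral_congr_ae (Filter.Eventually.of_forall fun ω => ?_)
    simp only [hF]
    ring
  rw [second_moment_sum _ h hint2 hvan2]
  -- lower-bound each diagonal term
  have hY2int : Integrable (fun ω => (w ⬝ᵥ u 0 ω) ^ 2) μ := by
    have e : (fun ω => (w ⬝ᵥ u 0 ω) ^ 2) = fun ω => (w ⬝ᵥ u 0 ω) * (w ⬝ᵥ u 0 ω) := by
      funext ω; ring
    rw [e]; exact int2 hu_meas hmom8 w w 0 0
  have hYlb : lam * (∑ a, w a ^ 2) ≤ ∫ ω, (w ⬝ᵥ u 0 ω) ^ 2 ∂μ := by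
    rw [← dot_SigmaMat hu_meas hmom8 w]
    calc lam * (∑ a, w a ^ 2) = lam * ∑ a, w a ^ 2 := rfl
      _ ≤ w ⬝ᵥ (SigmaMat μ u).mulVec w := quad_ge_of_le_lammin le_rfl w
  have hterm : ∀ ℓ, ℓ < h →
      δ * (∑ a, (irf hp A (h - 1 - ℓ) i a) ^ 2) * (lam * (∑ a, w a ^ 2))
        ≤ ∫ ω, ((irf hp A (h - 1 - ℓ) i ⬝ᵥ u ((0:ℤ) + (ℓ:ℤ) + 1) ω) * (w ⬝ᵥ u 0 ω))
            * ((irf hp A (h - 1 - ℓ) i ⬝ᵥ u ((0:ℤ) + (ℓ:ℤ) + 1) ω) * (w ⬝ᵥ u 0 ω)) ∂μ := by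
    intro ℓ hℓ
    set kk : ℤ := (0:ℤ) + (ℓ:ℤ) + 1 with hkk
    set F : Ω → ℝ := fun ω => (w ⬝ᵥ u 0 ω) ^ 2 with hF
    have hFmeas : StronglyMeasurable[sigmaGen u {s : ℤ | s < kk}] F := by
      refine Measurable.stronglyMeasurable ?_
      exact (measurable_dot_sigmaGen {s : ℤ | s < kk}
        (by simp only [Set.mem_setOf_eq, hkk]; omega) w).pow_const 2
    have hF0 : 0 ≤ᵐ[μ] F := Filter.Eventually.of_forall fun ω => sq_nonneg _
    have hFab : ∀ a b : Fin n, Integrable (fun ω => F ω * (u kk ω a * u kk ω b)) μ := by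
      intro a b
      have e : (fun ω => F ω * (u kk ω a * u kk ω b))
          = fun ω => (w ⬝ᵥ u 0 ω) * (w ⬝ᵥ u 0 ω)
            * ((Pi.single a 1 : Fin n → ℝ) ⬝ᵥ u kk ω)
            * ((Pi.single b 1 : Fin n → ℝ) ⬝ᵥ u kk ω) := by
        funext ω; simp only [hF, single_dot]; ring
      rw [e]
      exact int4 hu_meas hmom8 w w _ _ 0 0 kk kk
    have hlow := integral_mul_dot_sq_ge hu_meas hmom8 kk (hcond kk)
      (irf hp A (h - 1 - ℓ) i) F hFmeas hF0 hY2int hFab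
    have hing : ∫ ω, F ω * (irf hp A (h - 1 - ℓ) i ⬝ᵥ u kk ω) ^ 2 ∂μ
        = ∫ ω, ((irf hp A (h - 1 - ℓ) i ⬝ᵥ u kk ω) * (w ⬝ᵥ u 0 ω))
            * ((irf hp A (h - 1 - ℓ) i ⬝ᵥ u kk ω) * (w ⬝ᵥ u 0 ω)) ∂μ := by
      refine integral_congr_ae (Filter.Eventually.of_forall fun ω => ?_)
      simp only [hF]; ring
    rw [hing] at hlow
    refine le_trans ?_ hlow
    have hδA : 0 ≤ δ * (∑ a, (irf hp A (h - 1 - ℓ) i a) ^ 2) :=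
      mul_nonneg hδ.le (Finset.sum_nonneg fun a _ => sq_nonneg _)
    have hYF : ∫ ω, F ω ∂μ = ∫ ω, (w ⬝ᵥ u 0 ω) ^ 2 ∂μ := rfl
    calc δ * (∑ a, (irf hp A (h - 1 - ℓ) i a) ^ 2) * (lam * (∑ a, w a ^ 2))
        ≤ δ * (∑ a, (irf hp A (h - 1 - ℓ) i a) ^ 2) * ∫ ω, (w ⬝ᵥ u 0 ω) ^ 2 ∂μ :=
          mul_le_mul_of_nonneg_left hYlb hδA
      _ = δ * (∑ a, (irf hp A (h - 1 - ℓ) i a) ^ 2) * ∫ ω, F ω ∂μ := by rw [hYF]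
  -- sum up
  calc δ * lam * (∑ a, w a ^ 2) * (∑ ℓ ∈ Finset.range h, ∑ a, (irf hp A (h - 1 - ℓ) i a) ^ 2)
      = ∑ ℓ ∈ Finset.range h,
          δ * (∑ a, (irf hp A (h - 1 - ℓ) i a) ^ 2) * (lam * (∑ a, w a ^ 2)) := by
        rw [Finset.mul_sum]
        exact Finset.sum_congr rfl fun ℓ _ => by ring
    _ ≤ _ := Finset.sum_le_sum fun ℓ hℓ => hterm ℓ (Finset.mem_range.mp hℓ)
end Aux11
section Aux12
open MeasureTheory Finset Matrix LP

variable {Ω : Type} [MeasurableSpace Ω] {μ : Measure Ω} [IsProbabilityMeasure μ]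
  {n p : ℕ} {u : ℤ → Ω → (Fin n → ℝ)}
  (hu_meas : ∀ t, Measurable (u t))
  (hmom8 : ∀ t : ℤ, Integrable (fun ω => (∑ a, (u t ω a) ^ 2) ^ 4) μ)

include hu_meas hmom8

lemma int_sq (s : ℤ) : Integrable (fun ω => (∑ a, (u s ω a) ^ 2) ^ 2) μ := by
  refine Integrable.mono' ((integrable_const 1).add (hmom8 s)) ?_ ?_
  · refine Measurable.aestronglyMeasurable ?_
    exact (Finset.measurable_sum _ fun a _ =>
      ((measurable_pi_apply a).comp (hu_meas s)).pow_const 2).pow_const 2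
  · refine Filter.Eventually.of_forall fun ω => ?_
    simp only [Pi.add_apply]
    rw [Real.norm_eq_abs, abs_of_nonneg (by positivity)]
    exact sq_le_one_add_pow4 _

lemma onept8 (hu_stat : StrictlyStationary μ u) (s t : ℤ) :
    ∫ ω, (∑ a, (u s ω a) ^ 2) ^ 4 ∂μ = ∫ ω, (∑ a, (u t ω a) ^ 2) ^ 4 ∂μ :=
  onept hu_meas hu_stat (fun z => (∑ a, (z a) ^ 2) ^ 4)
    ((Finset.measurable_sum _ fun a _ => (measurable_pi_apply a).pow_const 2).pow_const 4) s t

lemma onept4 (hu_stat : StrictlyStationary μ u) (s t : ℤ) :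
    ∫ ω, (∑ a, (u s ω a) ^ 2) ^ 2 ∂μ = ∫ ω, (∑ a, (u t ω a) ^ 2) ^ 2 ∂μ :=
  onept hu_meas hu_stat (fun z => (∑ a, (z a) ^ 2) ^ 2)
    ((Finset.measurable_sum _ fun a _ => (measurable_pi_apply a).pow_const 2).pow_const 2) s t

lemma numer_a (hp : 0 < p) (hA1 : Assumption1 μ u) (hu_stat : StrictlyStationary μ u)
    (A : Fin p → Matrix (Fin n) (Fin n) ℝ) (i : Fin n) (w : Fin n → ℝ) (h : ℕ) (t : ℤ) :
    ∫ ω, (xi hp A h i u t ω * (w ⬝ᵥ u t ω)) ^ 4 ∂μ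
      ≤ 3 * ((∑ ℓ ∈ Finset.range h, ∑ a, (irf hp A (h - 1 - ℓ) i a) ^ 2)
          * (∑ a, w a ^ 2)) ^ 2 * ∫ ω, (∑ a, (u t ω a) ^ 2) ^ 4 ∂μ := by
  set K8 : ℝ := ∫ ω, (∑ a, (u t ω a) ^ 2) ^ 4 ∂μ with hK8
  have hK80 : 0 ≤ K8 := integral_nonneg fun ω => by positivity
  set β : ℕ → Fin n → ℝ := fun ℓ => irf hp A (h - 1 - ℓ) i with hβ
  set m : ℕ → Ω → ℝ := fun ℓ ω => (β ℓ ⬝ᵥ u (t + (ℓ:ℤ) + 1) ω) * (w ⬝ᵥ u t ω) with hm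
  set c : ℕ → ℝ := fun ℓ => (∑ a, β ℓ a ^ 2) * ((∑ a, w a ^ 2) * Real.sqrt K8) with hc_def
  have hpt : ∀ ω, (xi hp A h i u t ω * (w ⬝ᵥ u t ω)) ^ 4
      = (∑ ℓ ∈ Finset.range h, m ℓ ω) ^ 4 := by
    intro ω
    simp only [xi, hm, hβ]
    rw [← Finset.sum_mul]
  rw [integral_congr_ae (Filter.Eventually.of_forall hpt)]
  have hc : ∀ ℓ, ℓ < h → 0 ≤ c ℓ := by
    intro ℓ _
    simp only [hc_def]
    have h1 : 0 ≤ ∑ a, β ℓ a ^ 2 := Finset.sum_nonneg fun a _ => sq_nonneg _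
    have h2 : 0 ≤ ∑ a, w a ^ 2 := Finset.sum_nonneg fun a _ => sq_nonneg _
    positivity
  have hint : ∀ ℓ j k l : ℕ, ℓ < h → j < h → k < h → l < h →
      Integrable (fun ω => m ℓ ω * m j ω * m k ω * m l ω) μ := by
    intro ℓ j k l _ _ _ _
    have e : (fun ω => m ℓ ω * m j ω * m k ω * m l ω)
        = fun ω => (β ℓ ⬝ᵥ u (t + (ℓ:ℤ) + 1) ω) * (β j ⬝ᵥ u (t + (j:ℤ) + 1) ω)
          * (β k ⬝ᵥ u (t + (k:ℤ) + 1) ω) * (β l ⬝ᵥ u (t + (l:ℤ) + 1) ω)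
          * (w ⬝ᵥ u t ω) * (w ⬝ᵥ u t ω) * (w ⬝ᵥ u t ω) * (w ⬝ᵥ u t ω) := by
      funext ω; simp only [hm]; ring
    rw [e]
    exact int8 hu_meas hmom8 _ _ _ _ w w w w _ _ _ _ t t t t
  have hvan : ∀ ℓ j k l : ℕ, ℓ < h → j < h → k < h → l < h → l ≠ ℓ → l ≠ j → l ≠ k →
      ∫ ω, m ℓ ω * m j ω * m k ω * m l ω ∂μ = 0 := by
    intro ℓ j k l _ _ _ _ hlℓ hlj hlk
    set F : Ω → ℝ := fun ω => (β ℓ ⬝ᵥ u (t + (ℓ:ℤ) + 1) ω) * (β j ⬝ᵥ u (t + (j:ℤ) + 1) ω)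
      * (β k ⬝ᵥ u (t + (k:ℤ) + 1) ω)
      * ((w ⬝ᵥ u t ω) * (w ⬝ᵥ u t ω) * (w ⬝ᵥ u t ω) * (w ⬝ᵥ u t ω)) with hF
    have hFmeas : StronglyMeasurable[sigmaGen u {s : ℤ | s ≠ t + (l:ℤ) + 1}] F := by
      refine Measurable.stronglyMeasurable ?_
      have hw : Measurable[sigmaGen u {s : ℤ | s ≠ t + (l:ℤ) + 1}] (fun ω => w ⬝ᵥ u t ω) :=
        measurable_dot_sigmaGen _ (by simp only [Set.mem_setOf_eq]; omega) w
      refine Measurable.mul (Measurable.mul (Measurable.mul ?_ ?_) ?_)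
        ((hw.mul hw).mul hw |>.mul hw)
      · exact measurable_dot_sigmaGen _ (by simp only [Set.mem_setOf_eq]; omega) _
      · exact measurable_dot_sigmaGen _ (by simp only [Set.mem_setOf_eq]; omega) _
      · exact measurable_dot_sigmaGen _ (by simp only [Set.mem_setOf_eq]; omega) _
    have hFv : Integrable (F * fun ω => β l ⬝ᵥ u (t + (l:ℤ) + 1) ω) μ := by
      have e : (F * fun ω => β l ⬝ᵥ u (t + (l:ℤ) + 1) ω)
          = fun ω => (β ℓ ⬝ᵥ u (t + (ℓ:ℤ) + 1) ω) * (β j ⬝ᵥ u (t + (j:ℤ) + 1) ω)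
            * (β k ⬝ᵥ u (t + (k:ℤ) + 1) ω) * (w ⬝ᵥ u t ω) * (w ⬝ᵥ u t ω) * (w ⬝ᵥ u t ω)
            * (w ⬝ᵥ u t ω) * (β l ⬝ᵥ u (t + (l:ℤ) + 1) ω) := by
        funext ω; simp only [Pi.mul_apply, hF]; ring
      rw [e]
      exact int8 hu_meas hmom8 _ _ _ w w w w _ _ _ _ t t t t _
    have hzero := integral_mul_dot_eq_zero hu_meas hmom8 hA1 (t + (l:ℤ) + 1) (β l) F hFmeas hFv
    rw [← hzero]
    refine integral_congr_ae (Filter.Eventually.of_forall fun ω => ?_)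
    simp only [hF, hm]
    ring
  have hXint : ∀ s1 s2 : ℤ, Integrable (fun ω => (∑ a, β 0 a ^ 2) ^ 2 * 1) μ :=
    fun _ _ => integrable_const _
  have hdiag : ∀ ℓ, ℓ < h → ∫ ω, m ℓ ω * m ℓ ω * m ℓ ω * m ℓ ω ∂μ ≤ c ℓ * c ℓ := by
    intro ℓ _
    have hrhs_int : Integrable (fun ω => (∑ a, β ℓ a ^ 2) ^ 2 * (∑ a, w a ^ 2) ^ 2
        * (((∑ a, (u (t + (ℓ:ℤ) + 1) ω a) ^ 2) ^ 4 + (∑ a, (u t ω a) ^ 2) ^ 4) / 2)) μ := by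
      have e : (fun ω => (∑ a, β ℓ a ^ 2) ^ 2 * (∑ a, w a ^ 2) ^ 2
          * (((∑ a, (u (t + (ℓ:ℤ) + 1) ω a) ^ 2) ^ 4 + (∑ a, (u t ω a) ^ 2) ^ 4) / 2))
          = fun ω => ((∑ a, β ℓ a ^ 2) ^ 2 * (∑ a, w a ^ 2) ^ 2 / 2)
            * ((∑ a, (u (t + (ℓ:ℤ) + 1) ω a) ^ 2) ^ 4 + (∑ a, (u t ω a) ^ 2) ^ 4) := by
        funext ω; ring
      rw [e]
      exact ((hmom8 _).add (hmom8 t)).const_mul _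
    have hmono := integral_mono (hint ℓ ℓ ℓ ℓ ‹ℓ < h› ‹ℓ < h› ‹ℓ < h› ‹ℓ < h›) hrhs_int
      (fun ω => by
        simp only [hm]
        exact bound_diag _ _ _ _ _ _ (dot_sq_le _ _) (dot_sq_le _ _))
    refine le_trans hmono ?_
    have e2 : (fun ω => (∑ a, β ℓ a ^ 2) ^ 2 * (∑ a, w a ^ 2) ^ 2
        * (((∑ a, (u (t + (ℓ:ℤ) + 1) ω a) ^ 2) ^ 4 + (∑ a, (u t ω a) ^ 2) ^ 4) / 2))
        = fun ω => ((∑ a, β ℓ a ^ 2) ^ 2 * (∑ a, w a ^ 2) ^ 2 / 2)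
          * ((∑ a, (u (t + (ℓ:ℤ) + 1) ω a) ^ 2) ^ 4 + (∑ a, (u t ω a) ^ 2) ^ 4) := by
      funext ω; ring
    rw [e2, integral_const_mul, integral_add (hmom8 _) (hmom8 t),
      onept8 hu_meas hmom8 hu_stat (t + (ℓ:ℤ) + 1) t, ← hK8]
    have : c ℓ * c ℓ = (∑ a, β ℓ a ^ 2) ^ 2 * (∑ a, w a ^ 2) ^ 2 * K8 := by
      simp only [hc_def]
      rw [show ((∑ a, β ℓ a ^ 2) * ((∑ a, w a ^ 2) * Real.sqrt K8))
          * ((∑ a, β ℓ a ^ 2) * ((∑ a, w a ^ 2) * Real.sqrt K8))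
          = (∑ a, β ℓ a ^ 2) ^ 2 * (∑ a, w a ^ 2) ^ 2 * (Real.sqrt K8 * Real.sqrt K8) by ring]
      rw [Real.mul_self_sqrt hK80]
    rw [this]
    ring_nf
    exact le_refl _
  have hpair : ∀ ℓ j, ℓ < h → j < h →
      ∫ ω, m ℓ ω * m ℓ ω * m j ω * m j ω ∂μ ≤ c ℓ * c j := by
    intro ℓ j _ _
    have hrhs_int : Integrable (fun ω => (∑ a, β ℓ a ^ 2) * (∑ a, β j a ^ 2)
        * (∑ a, w a ^ 2) ^ 2
        * (((∑ a, (u (t + (ℓ:ℤ) + 1) ω a) ^ 2) ^ 4 + (∑ a, (u (t + (j:ℤ) + 1) ω a) ^ 2) ^ 4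
          + 2 * (∑ a, (u t ω a) ^ 2) ^ 4) / 4)) μ := by
      have e : (fun ω => (∑ a, β ℓ a ^ 2) * (∑ a, β j a ^ 2) * (∑ a, w a ^ 2) ^ 2
          * (((∑ a, (u (t + (ℓ:ℤ) + 1) ω a) ^ 2) ^ 4 + (∑ a, (u (t + (j:ℤ) + 1) ω a) ^ 2) ^ 4
            + 2 * (∑ a, (u t ω a) ^ 2) ^ 4) / 4))
          = fun ω => ((∑ a, β ℓ a ^ 2) * (∑ a, β j a ^ 2) * (∑ a, w a ^ 2) ^ 2 / 4)
            * (((∑ a, (u (t + (ℓ:ℤ) + 1) ω a) ^ 2) ^ 4 + (∑ a, (u (t + (j:ℤ) + 1) ω a) ^ 2) ^ 4)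
              + 2 * (∑ a, (u t ω a) ^ 2) ^ 4) := by
        funext ω; ring
      rw [e]
      exact (((hmom8 _).add (hmom8 _)).add ((hmom8 t).const_mul 2)).const_mul _
    have hmono := integral_mono (hint ℓ ℓ j j ‹ℓ < h› ‹ℓ < h› ‹j < h› ‹j < h›) hrhs_int
      (fun ω => by
        simp only [hm]
        refine bound_pair _ _ _ _ _ _ _ _ _ (dot_sq_le _ _) (dot_sq_le _ _) (dot_sq_le _ _)
          (Finset.sum_nonneg fun a _ => sq_nonneg _) (Finset.sum_nonneg fun a _ => sq_nonneg _)
          (Finset.sum_nonneg fun a _ => sq_nonneg _) (Finset.sum_nonneg fun a _ => sq_nonneg _)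
          (Finset.sum_nonneg fun a _ => sq_nonneg _) (Finset.sum_nonneg fun a _ => sq_nonneg _))
    refine le_trans hmono ?_
    have e2 : (fun ω => (∑ a, β ℓ a ^ 2) * (∑ a, β j a ^ 2) * (∑ a, w a ^ 2) ^ 2
        * (((∑ a, (u (t + (ℓ:ℤ) + 1) ω a) ^ 2) ^ 4 + (∑ a, (u (t + (j:ℤ) + 1) ω a) ^ 2) ^ 4
          + 2 * (∑ a, (u t ω a) ^ 2) ^ 4) / 4))
        = fun ω => ((∑ a, β ℓ a ^ 2) * (∑ a, β j a ^ 2) * (∑ a, w a ^ 2) ^ 2 / 4)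
          * (((∑ a, (u (t + (ℓ:ℤ) + 1) ω a) ^ 2) ^ 4 + (∑ a, (u (t + (j:ℤ) + 1) ω a) ^ 2) ^ 4)
            + 2 * (∑ a, (u t ω a) ^ 2) ^ 4) := by
      funext ω; ring
    have Jadd : Integrable (fun ω => (∑ a, (u (t + (ℓ:ℤ) + 1) ω a) ^ 2) ^ 4
        + (∑ a, (u (t + (j:ℤ) + 1) ω a) ^ 2) ^ 4) μ := (hmom8 _).add (hmom8 _)
    rw [e2, integral_const_mul, integral_add Jadd ((hmom8 t).const_mul 2),
      integral_add (hmom8 _) (hmom8 _), integral_const_mul,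
      onept8 hu_meas hmom8 hu_stat (t + (ℓ:ℤ) + 1) t, onept8 hu_meas hmom8 hu_stat (t + (j:ℤ) + 1) t,
      ← hK8]
    have : c ℓ * c j = (∑ a, β ℓ a ^ 2) * (∑ a, β j a ^ 2) * (∑ a, w a ^ 2) ^ 2 * K8 := by
      simp only [hc_def]
      rw [show ((∑ a, β ℓ a ^ 2) * ((∑ a, w a ^ 2) * Real.sqrt K8))
          * ((∑ a, β j a ^ 2) * ((∑ a, w a ^ 2) * Real.sqrt K8))
          = (∑ a, β ℓ a ^ 2) * (∑ a, β j a ^ 2) * (∑ a, w a ^ 2) ^ 2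
            * (Real.sqrt K8 * Real.sqrt K8) by ring]
      rw [Real.mul_self_sqrt hK80]
    rw [this]
    ring_nf
    exact le_refl _
  have hmain := fourth_moment_bound m c h hc hint hvan hdiag hpair
  refine le_trans hmain ?_
  have hsum : (∑ ℓ ∈ Finset.range h, c ℓ)
      = (∑ ℓ ∈ Finset.range h, ∑ a, β ℓ a ^ 2) * ((∑ a, w a ^ 2) * Real.sqrt K8) := by
    simp only [hc_def]
    rw [← Finset.sum_mul]
  rw [hsum]
  rw [show ((∑ ℓ ∈ Finset.range h, ∑ a, β ℓ a ^ 2) * ((∑ a, w a ^ 2) * Real.sqrt K8)) ^ 2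
      = ((∑ ℓ ∈ Finset.range h, ∑ a, β ℓ a ^ 2) * (∑ a, w a ^ 2)) ^ 2
        * (Real.sqrt K8 * Real.sqrt K8) by ring]
  rw [Real.mul_self_sqrt hK80]
  simp only [hβ, ← hK8]
  ring_nf
  exact le_refl _
end Aux12
section Aux13
open MeasureTheory Finset Matrix LP

variable {Ω : Type} [MeasurableSpace Ω] {μ : Measure Ω} [IsProbabilityMeasure μ]
  {n p : ℕ} {u : ℤ → Ω → (Fin n → ℝ)}
  (hu_meas : ∀ t, Measurable (u t))
  (hmom8 : ∀ t : ℤ, Integrable (fun ω => (∑ a, (u t ω a) ^ 2) ^ 4) μ)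

include hu_meas hmom8

lemma numer_b (hp : 0 < p) (hA1 : Assumption1 μ u) (hu_stat : StrictlyStationary μ u)
    (A : Fin p → Matrix (Fin n) (Fin n) ℝ) (i : Fin n) (h : ℕ) (t : ℤ) :
    ∫ ω, (xi hp A h i u t ω) ^ 4 ∂μ
      ≤ 3 * (∑ ℓ ∈ Finset.range h, ∑ a, (irf hp A (h - 1 - ℓ) i a) ^ 2) ^ 2
          * ∫ ω, (∑ a, (u t ω a) ^ 2) ^ 2 ∂μ := by
  set K4 : ℝ := ∫ ω, (∑ a, (u t ω a) ^ 2) ^ 2 ∂μ with hK4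
  have hK40 : 0 ≤ K4 := integral_nonneg fun ω => by positivity
  set β : ℕ → Fin n → ℝ := fun ℓ => irf hp A (h - 1 - ℓ) i with hβ
  set m : ℕ → Ω → ℝ := fun ℓ ω => β ℓ ⬝ᵥ u (t + (ℓ:ℤ) + 1) ω with hm
  set c : ℕ → ℝ := fun ℓ => (∑ a, β ℓ a ^ 2) * Real.sqrt K4 with hc_def
  have hpt : ∀ ω, (xi hp A h i u t ω) ^ 4 = (∑ ℓ ∈ Finset.range h, m ℓ ω) ^ 4 := by
    intro ω; simp only [xi, hm, hβ]
  rw [integral_congr_ae (Filter.Eventually.of_forall hpt)]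
  have hc : ∀ ℓ, ℓ < h → 0 ≤ c ℓ := by
    intro ℓ _
    simp only [hc_def]
    have h1 : 0 ≤ ∑ a, β ℓ a ^ 2 := Finset.sum_nonneg fun a _ => sq_nonneg _
    positivity
  have hint : ∀ ℓ j k l : ℕ, ℓ < h → j < h → k < h → l < h →
      Integrable (fun ω => m ℓ ω * m j ω * m k ω * m l ω) μ := by
    intro ℓ j k l _ _ _ _
    exact int4 hu_meas hmom8 _ _ _ _ _ _ _ _
  have hvan : ∀ ℓ j k l : ℕ, ℓ < h → j < h → k < h → l < h → l ≠ ℓ → l ≠ j → l ≠ k →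
      ∫ ω, m ℓ ω * m j ω * m k ω * m l ω ∂μ = 0 := by
    intro ℓ j k l _ _ _ _ hlℓ hlj hlk
    set F : Ω → ℝ := fun ω => (β ℓ ⬝ᵥ u (t + (ℓ:ℤ) + 1) ω) * (β j ⬝ᵥ u (t + (j:ℤ) + 1) ω)
      * (β k ⬝ᵥ u (t + (k:ℤ) + 1) ω) with hF
    have hFmeas : StronglyMeasurable[sigmaGen u {s : ℤ | s ≠ t + (l:ℤ) + 1}] F := by
      refine Measurable.stronglyMeasurable ?_
      refine Measurable.mul (Measurable.mul ?_ ?_) ?_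
      · exact measurable_dot_sigmaGen _ (by simp only [Set.mem_setOf_eq]; omega) _
      · exact measurable_dot_sigmaGen _ (by simp only [Set.mem_setOf_eq]; omega) _
      · exact measurable_dot_sigmaGen _ (by simp only [Set.mem_setOf_eq]; omega) _
    have hFv : Integrable (F * fun ω => β l ⬝ᵥ u (t + (l:ℤ) + 1) ω) μ := by
      have e : (F * fun ω => β l ⬝ᵥ u (t + (l:ℤ) + 1) ω)
          = fun ω => (β ℓ ⬝ᵥ u (t + (ℓ:ℤ) + 1) ω) * (β j ⬝ᵥ u (t + (j:ℤ) + 1) ω)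
            * (β k ⬝ᵥ u (t + (k:ℤ) + 1) ω) * (β l ⬝ᵥ u (t + (l:ℤ) + 1) ω) := by
        funext ω; simp only [Pi.mul_apply, hF]
      rw [e]
      exact int4 hu_meas hmom8 _ _ _ _ _ _ _ _
    have hzero := integral_mul_dot_eq_zero hu_meas hmom8 hA1 (t + (l:ℤ) + 1) (β l) F hFmeas hFv
    rw [← hzero]
  have hdiag : ∀ ℓ, ℓ < h → ∫ ω, m ℓ ω * m ℓ ω * m ℓ ω * m ℓ ω ∂μ ≤ c ℓ * c ℓ := by
    intro ℓ _
    have hrhs_int : Integrable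
        (fun ω => (∑ a, β ℓ a ^ 2) ^ 2 * (∑ a, (u (t + (ℓ:ℤ) + 1) ω a) ^ 2) ^ 2) μ :=
      (int_sq hu_meas hmom8 _).const_mul _
    have hmono := integral_mono (hint ℓ ℓ ℓ ℓ ‹ℓ < h› ‹ℓ < h› ‹ℓ < h› ‹ℓ < h›) hrhs_int
      (fun ω => by
        simp only [hm]
        exact bound_diag_b _ _ _ (dot_sq_le _ _))
    refine le_trans hmono ?_
    rw [integral_const_mul, onept4 hu_meas hmom8 hu_stat (t + (ℓ:ℤ) + 1) t, ← hK4]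
    have : c ℓ * c ℓ = (∑ a, β ℓ a ^ 2) ^ 2 * K4 := by
      simp only [hc_def]
      rw [show ((∑ a, β ℓ a ^ 2) * Real.sqrt K4) * ((∑ a, β ℓ a ^ 2) * Real.sqrt K4)
          = (∑ a, β ℓ a ^ 2) ^ 2 * (Real.sqrt K4 * Real.sqrt K4) by ring]
      rw [Real.mul_self_sqrt hK40]
    rw [this]
  have hpair : ∀ ℓ j, ℓ < h → j < h →
      ∫ ω, m ℓ ω * m ℓ ω * m j ω * m j ω ∂μ ≤ c ℓ * c j := by
    intro ℓ j _ _
    have hrhs_int : Integrable (fun ω => (∑ a, β ℓ a ^ 2) * (∑ a, β j a ^ 2)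
        * (((∑ a, (u (t + (ℓ:ℤ) + 1) ω a) ^ 2) ^ 2 + (∑ a, (u (t + (j:ℤ) + 1) ω a) ^ 2) ^ 2)
          / 2)) μ := by
      have e : (fun ω => (∑ a, β ℓ a ^ 2) * (∑ a, β j a ^ 2)
          * (((∑ a, (u (t + (ℓ:ℤ) + 1) ω a) ^ 2) ^ 2 + (∑ a, (u (t + (j:ℤ) + 1) ω a) ^ 2) ^ 2)
            / 2))
          = fun ω => ((∑ a, β ℓ a ^ 2) * (∑ a, β j a ^ 2) / 2)
            * ((∑ a, (u (t + (ℓ:ℤ) + 1) ω a) ^ 2) ^ 2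
              + (∑ a, (u (t + (j:ℤ) + 1) ω a) ^ 2) ^ 2) := by
        funext ω; ring
      rw [e]
      exact ((int_sq hu_meas hmom8 _).add (int_sq hu_meas hmom8 _)).const_mul _
    have hmono := integral_mono (hint ℓ ℓ j j ‹ℓ < h› ‹ℓ < h› ‹j < h› ‹j < h›) hrhs_int
      (fun ω => by
        simp only [hm]
        exact bound_pair_b _ _ _ _ _ _ (dot_sq_le _ _) (dot_sq_le _ _)
          (Finset.sum_nonneg fun a _ => sq_nonneg _)
          (Finset.sum_nonneg fun a _ => sq_nonneg _))
    refine le_trans hmono ?_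
    have e2 : (fun ω => (∑ a, β ℓ a ^ 2) * (∑ a, β j a ^ 2)
        * (((∑ a, (u (t + (ℓ:ℤ) + 1) ω a) ^ 2) ^ 2 + (∑ a, (u (t + (j:ℤ) + 1) ω a) ^ 2) ^ 2)
          / 2))
        = fun ω => ((∑ a, β ℓ a ^ 2) * (∑ a, β j a ^ 2) / 2)
          * ((∑ a, (u (t + (ℓ:ℤ) + 1) ω a) ^ 2) ^ 2
            + (∑ a, (u (t + (j:ℤ) + 1) ω a) ^ 2) ^ 2) := by
      funext ω; ring
    rw [e2, integral_const_mul, integral_add (int_sq hu_meas hmom8 _) (int_sq hu_meas hmom8 _),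
      onept4 hu_meas hmom8 hu_stat (t + (ℓ:ℤ) + 1) t, onept4 hu_meas hmom8 hu_stat (t + (j:ℤ) + 1) t,
      ← hK4]
    have : c ℓ * c j = (∑ a, β ℓ a ^ 2) * (∑ a, β j a ^ 2) * K4 := by
      simp only [hc_def]
      rw [show ((∑ a, β ℓ a ^ 2) * Real.sqrt K4) * ((∑ a, β j a ^ 2) * Real.sqrt K4)
          = (∑ a, β ℓ a ^ 2) * (∑ a, β j a ^ 2) * (Real.sqrt K4 * Real.sqrt K4) by ring]
      rw [Real.mul_self_sqrt hK40]
    rw [this]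
    ring_nf
    exact le_refl _
  have hmain := fourth_moment_bound m c h hc hint hvan hdiag hpair
  refine le_trans hmain ?_
  have hsum : (∑ ℓ ∈ Finset.range h, c ℓ)
      = (∑ ℓ ∈ Finset.range h, ∑ a, β ℓ a ^ 2) * Real.sqrt K4 := by
    simp only [hc_def]
    rw [← Finset.sum_mul]
  rw [hsum]
  rw [show ((∑ ℓ ∈ Finset.range h, ∑ a, β ℓ a ^ 2) * Real.sqrt K4) ^ 2
      = (∑ ℓ ∈ Finset.range h, ∑ a, β ℓ a ^ 2) ^ 2 * (Real.sqrt K4 * Real.sqrt K4) by ring]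
  rw [Real.mul_self_sqrt hK40]
  simp only [hβ, ← hK4]
  ring_nf
  exact le_refl _
end Aux13
set_option maxHeartbeats 1000000 in
open LP in
/-- Lemma 7 (uniform fourth-moment bounds for the scores and forecast errors). -/
theorem statement12
    {Ω : Type} [MeasurableSpace Ω] (μ : Measure Ω) [IsProbabilityMeasure μ]
    (n p : ℕ) (hn : 0 < n) (hp : 0 < p)
    (u : ℤ → Ω → (Fin n → ℝ)) (hu_meas : ∀ t, Measurable (u t))
    (hu_stat : StrictlyStationary μ u)
    (hA1 : Assumption1 μ u)
    -- Assumption 2(i)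
    (δ : ℝ) (hδ : 0 < δ)
    (hmom8 : ∀ t : ℤ, Integrable (fun ω => (∑ a, (u t ω a) ^ 2) ^ 4) μ)
    (hcond : ∀ t : ℤ, ∀ᵐ ω ∂μ, δ ≤ lammin (condSecondMoment μ u t ω))
    (Cb ε : ℝ) (hCb : 0 < Cb) (hε0 : 0 < ε) (hε1 : ε < 1) :
    ∀ (h : ℕ), ∀ A ∈ paramSpace n p 0 Cb ε, ∀ (i : Fin n) (w : Fin n → ℝ), w ≠ 0 →
      ∀ t : ℤ,
      (∫ ω, ((vfun μ hp A h i u w)⁻¹ * xi hp A h i u t ω * (w ⬝ᵥ u t ω)) ^ 4 ∂μ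
          ≤ 6 * (∫ ω, (∑ a, (u t ω a) ^ 2) ^ 4 ∂μ)
            / (δ ^ 2 * (lammin (SigmaMat μ u)) ^ 2)) ∧
      (∫ ω, ((vfun μ hp A h i u w)⁻¹ * xi hp A h i u t ω) ^ 4 ∂μ
          ≤ 6 * (∫ ω, (∑ a, (u t ω a) ^ 2) ^ 2 ∂μ)
            / (δ ^ 2 * (lammin (SigmaMat μ u)) ^ 2 * (euclNorm w) ^ 4)) := by
  intro h A hA i w hw t
  set lam : ℝ := lammin (SigmaMat μ u) with hlam
  have hlamδ : δ ≤ lam := delta_le_lammin_Sigma hu_meas hmom8 hn (hcond 0)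
  have hlam0 : 0 < lam := lt_of_lt_of_le hδ hlamδ
  set σw : ℝ := ∑ a, w a ^ 2 with hσw_def
  have hσw : 0 < σw := by
    rcases Function.ne_iff.mp hw with ⟨a, ha⟩
    have h1 : 0 < w a ^ 2 := lt_of_le_of_ne (sq_nonneg _) (Ne.symm (pow_ne_zero 2 ha))
    exact lt_of_lt_of_le h1 (Finset.single_le_sum (f := fun a => w a ^ 2)
      (fun b _ => sq_nonneg _) (Finset.mem_univ a))
  set K8 : ℝ := ∫ ω, (∑ a, (u t ω a) ^ 2) ^ 4 ∂μ with hK8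
  have hK80 : 0 ≤ K8 := integral_nonneg fun ω => by positivity
  set K4 : ℝ := ∫ ω, (∑ a, (u t ω a) ^ 2) ^ 2 ∂μ with hK4
  have hK40 : 0 ≤ K4 := integral_nonneg fun ω => by positivity
  have heucl : (euclNorm w) ^ 4 = σw ^ 2 := by
    rw [euclNorm, show (4 : ℕ) = 2 * 2 from rfl, pow_mul, Real.sq_sqrt hσw.le, hσw_def]
  rcases Nat.eq_zero_or_pos h with h0 | hh1
  · -- horizon 0 : forecast error is identically zero
    subst h0
    have hxi0 : ∀ ω, xi hp A 0 i u t ω = 0 := by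
      intro ω; simp [xi]
    constructor
    · have e : ∫ ω, ((vfun μ hp A 0 i u w)⁻¹ * xi hp A 0 i u t ω * (w ⬝ᵥ u t ω)) ^ 4 ∂μ = 0 := by
        rw [integral_congr_ae (Filter.Eventually.of_forall fun ω => by rw [hxi0 ω])]
        simp
      rw [e]
      have h6 : (0:ℝ) ≤ 6 * K8 := by linarith
      exact div_nonneg h6 (by positivity)
    · have e : ∫ ω, ((vfun μ hp A 0 i u w)⁻¹ * xi hp A 0 i u t ω) ^ 4 ∂μ = 0 := by
        rw [integral_congr_ae (Filter.Eventually.of_forall fun ω => by rw [hxi0 ω])]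
        simp
      rw [e]
      have h6 : (0:ℝ) ≤ 6 * K4 := by linarith
      refine div_nonneg h6 ?_
      have h7 : (0:ℝ) ≤ (euclNorm w) ^ 4 := by positivity
      positivity
  · -- positive horizon
    set B : ℝ := ∑ ℓ ∈ Finset.range h, ∑ a, (irf hp A (h - 1 - ℓ) i a) ^ 2 with hB
    have hB1 : (1:ℝ) ≤ B := by
      have hmem : h - 1 ∈ Finset.range h := Finset.mem_range.mpr (by omega)
      have h1 : (∑ a, (irf hp A (h - 1 - (h - 1)) i a) ^ 2) = 1 := by
        rw [show h - 1 - (h - 1) = 0 by omega]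
        exact irf_zero hp A i
      calc (1:ℝ) = ∑ a, (irf hp A (h - 1 - (h - 1)) i a) ^ 2 := h1.symm
        _ ≤ B := Finset.single_le_sum (f := fun ℓ => ∑ a, (irf hp A (h - 1 - ℓ) i a) ^ 2)
            (fun ℓ _ => Finset.sum_nonneg fun a _ => sq_nonneg _) hmem
    have hB0 : 0 < B := lt_of_lt_of_le one_pos hB1
    set D : ℝ := ∫ ω, (xi hp A h i u 0 ω) ^ 2 * (w ⬝ᵥ u 0 ω) ^ 2 ∂μ with hD
    have hD0 : 0 ≤ D := integral_nonneg fun ω => mul_nonneg (sq_nonneg _) (sq_nonneg _)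
    have hDlb : δ * lam * σw * B ≤ D :=
      denom_lb hu_meas hmom8 hn hp hA1 hδ hcond A i w h
    set E : ℝ := δ * lam * σw * B with hE_def
    have hE : 0 < E := by
      have := mul_pos (mul_pos (mul_pos hδ hlam0) hσw) hB0
      exact this
    have hv : vfun μ hp A h i u w = Real.sqrt D := rfl
    have hvinv4 : ((vfun μ hp A h i u w)⁻¹) ^ 4 = (D ^ 2)⁻¹ := by
      rw [hv, inv_pow, show (4 : ℕ) = 2 * 2 from rfl, pow_mul, Real.sq_sqrt hD0]
    have hE2 : (0:ℝ) < E ^ 2 := pow_pos hE 2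
    have hdl2 : (0:ℝ) < δ ^ 2 * lam ^ 2 := mul_pos (pow_pos hδ 2) (pow_pos hlam0 2)
    have hsB2 : (0:ℝ) < σw ^ 2 * B ^ 2 := mul_pos (pow_pos hσw 2) (pow_pos hB0 2)
    have hEsq : E ^ 2 = (δ ^ 2 * lam ^ 2) * (σw ^ 2 * B ^ 2) := by rw [hE_def]; ring
    have hD2E2 : (D ^ 2)⁻¹ ≤ (E ^ 2)⁻¹ := by
      refine inv_anti₀ hE2 ?_
      exact pow_le_pow_left₀ hE.le hDlb 2
    constructor
    · -- part (a)
      have e : ∫ ω, ((vfun μ hp A h i u w)⁻¹ * xi hp A h i u t ω * (w ⬝ᵥ u t ω)) ^ 4 ∂μ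
          = (D ^ 2)⁻¹ * ∫ ω, (xi hp A h i u t ω * (w ⬝ᵥ u t ω)) ^ 4 ∂μ := by
        rw [integral_congr_ae (Filter.Eventually.of_forall (fun ω => show
          ((vfun μ hp A h i u w)⁻¹ * xi hp A h i u t ω * (w ⬝ᵥ u t ω)) ^ 4
            = ((vfun μ hp A h i u w)⁻¹) ^ 4 * (xi hp A h i u t ω * (w ⬝ᵥ u t ω)) ^ 4
          from by ring))]
        rw [integral_const_mul, hvinv4]
      rw [e]
      have hNa : ∫ ω, (xi hp A h i u t ω * (w ⬝ᵥ u t ω)) ^ 4 ∂μ ≤ 3 * (B * σw) ^ 2 * K8 :=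
        numer_a hu_meas hmom8 hp hA1 hu_stat A i w h t
      have hNa0 : 0 ≤ ∫ ω, (xi hp A h i u t ω * (w ⬝ᵥ u t ω)) ^ 4 ∂μ :=
        integral_nonneg fun ω => by positivity
      calc (D ^ 2)⁻¹ * ∫ ω, (xi hp A h i u t ω * (w ⬝ᵥ u t ω)) ^ 4 ∂μ
          ≤ (E ^ 2)⁻¹ * ∫ ω, (xi hp A h i u t ω * (w ⬝ᵥ u t ω)) ^ 4 ∂μ :=
            mul_le_mul_of_nonneg_right hD2E2 hNa0
        _ ≤ (E ^ 2)⁻¹ * (3 * (B * σw) ^ 2 * K8) :=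
            mul_le_mul_of_nonneg_left hNa (inv_nonneg.mpr hE2.le)
        _ = ((δ ^ 2 * lam ^ 2) * (σw ^ 2 * B ^ 2))⁻¹ * (3 * (B * σw) ^ 2 * K8) := by
            rw [hEsq]
        _ = (δ ^ 2 * lam ^ 2)⁻¹ * (((σw ^ 2 * B ^ 2)⁻¹ * (σw ^ 2 * B ^ 2)) * (3 * K8)) := by
            rw [mul_inv]
            ring
        _ = (δ ^ 2 * lam ^ 2)⁻¹ * (3 * K8) := by
            rw [inv_mul_cancel₀ (ne_of_gt hsB2), one_mul]
        _ = 3 * K8 / (δ ^ 2 * lam ^ 2) := by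
            rw [inv_mul_eq_div]
        _ ≤ 6 * K8 / (δ ^ 2 * lam ^ 2) := by
            rw [div_le_div_iff₀ hdl2 hdl2]
            nlinarith [hdl2]
    · -- part (b)
      have e : ∫ ω, ((vfun μ hp A h i u w)⁻¹ * xi hp A h i u t ω) ^ 4 ∂μ
          = (D ^ 2)⁻¹ * ∫ ω, (xi hp A h i u t ω) ^ 4 ∂μ := by
        rw [integral_congr_ae (Filter.Eventually.of_forall (fun ω => show
          ((vfun μ hp A h i u w)⁻¹ * xi hp A h i u t ω) ^ 4
            = ((vfun μ hp A h i u w)⁻¹) ^ 4 * (xi hp A h i u t ω) ^ 4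
          from by ring))]
        rw [integral_const_mul, hvinv4]
      rw [e]
      have hNb : ∫ ω, (xi hp A h i u t ω) ^ 4 ∂μ ≤ 3 * B ^ 2 * K4 :=
        numer_b hu_meas hmom8 hp hA1 hu_stat A i h t
      have hNb0 : 0 ≤ ∫ ω, (xi hp A h i u t ω) ^ 4 ∂μ :=
        integral_nonneg fun ω => by positivity
      rw [heucl]
      calc (D ^ 2)⁻¹ * ∫ ω, (xi hp A h i u t ω) ^ 4 ∂μ
          ≤ (E ^ 2)⁻¹ * ∫ ω, (xi hp A h i u t ω) ^ 4 ∂μ :=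
            mul_le_mul_of_nonneg_right hD2E2 hNb0
        _ ≤ (E ^ 2)⁻¹ * (3 * B ^ 2 * K4) :=
            mul_le_mul_of_nonneg_left hNb (inv_nonneg.mpr hE2.le)
        _ = ((δ ^ 2 * lam ^ 2 * σw ^ 2) * B ^ 2)⁻¹ * (3 * B ^ 2 * K4) := by
            rw [hEsq]
            ring_nf
        _ = (δ ^ 2 * lam ^ 2 * σw ^ 2)⁻¹ * (((B ^ 2)⁻¹ * B ^ 2) * (3 * K4)) := by
            rw [mul_inv]
            ring
        _ = (δ ^ 2 * lam ^ 2 * σw ^ 2)⁻¹ * (3 * K4) := by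
            rw [inv_mul_cancel₀ (ne_of_gt (pow_pos hB0 2)), one_mul]
        _ = 3 * K4 / (δ ^ 2 * lam ^ 2 * σw ^ 2) := by
            rw [inv_mul_eq_div]
        _ ≤ 6 * K4 / (δ ^ 2 * lam ^ 2 * σw ^ 2) := by
            have hds2 : (0:ℝ) < δ ^ 2 * lam ^ 2 * σw ^ 2 := mul_pos hdl2 (pow_pos hσw 2)
            rw [div_le_div_iff₀ hds2 hds2]
            nlinarith [hds2]
end
end

section
/- (Martingale difference property of the scores with respect to the reversed-time filtration.) Let {u_t}_{t∈ℤ} be a strictly stationary ℝ^n-valued process with E‖u_t‖² < ∞ satisfying E(u_t ∣ {u_s}_{s≠t}) = 0 almost surely. Then for every n × np coefficient matrix A, every horizon h ∈ ℕ, every i ∈ {1,…,n}, every w ∈ ℝ^n, and every t ∈ ℤ, E[ ξ_{i,t}(A,h) (w'u_t) ∣ σ(u_{t+1}, u_{t+2}, …) ] = 0 almost surely; consequently, the reversed-time array χ_{T,t} = ξ_{i,T−h+1−t}(A,h)(w'u_{T−h+1−t}) is a martingale difference array with respect to the filtration 𝔉_{T,t} = σ(u_{T−h+1−t}, u_{T−h+2−t},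 …). -/
open MeasureTheory Filter Finset Matrix Topology

noncomputable section

namespace LP

variable {Ω : Type} [MeasurableSpace Ω]

variable {n p : ℕ}

section Aux

variable {μ : Measure Ω} [IsProbabilityMeasure μ] {n : ℕ} {u : ℤ → Ω → (Fin n → ℝ)}

omit [MeasurableSpace Ω] in
lemma sigmaGen_mono {S S' : Set ℤ} (hSS : S ⊆ S') : sigmaGen u S ≤ sigmaGen u S' := by
  refine iSup₂_le fun s hs => ?_
  exact le_iSup₂ (f := fun (s : ℤ) (_ : s ∈ S') => MeasurableSpace.comap (u s) inferInstance)
    s (hSS hs)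

omit [MeasurableSpace Ω] in
lemma measurable_sigmaGen {S : Set ℤ} {s : ℤ} (hs : s ∈ S) :
    @Measurable Ω (Fin n → ℝ) (sigmaGen u S) _ (u s) := by
  have hle : MeasurableSpace.comap (u s) inferInstance ≤ sigmaGen u S :=
    le_iSup₂ (f := fun (s : ℤ) (_ : s ∈ S) => MeasurableSpace.comap (u s) inferInstance) s hs
  exact Measurable.mono (measurable_iff_comap_le.mpr le_rfl) hle le_rfl

lemma sigmaGen_le (hu_meas : ∀ t, Measurable (u t)) (S : Set ℤ) :
    sigmaGen u S ≤ (inferInstance : MeasurableSpace Ω) :=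
  iSup₂_le fun s _ => (hu_meas s).comap_le

lemma measurable_dot (hu_meas : ∀ t, Measurable (u t)) (v : Fin n → ℝ) (s : ℤ) :
    Measurable (fun ω => v ⬝ᵥ u s ω) := by
  simp only [dotProduct]
  exact Finset.measurable_sum _ fun a _ =>
    ((measurable_pi_apply a).comp (hu_meas s)).const_mul (v a)

lemma integrable_u (hu_meas : ∀ t, Measurable (u t))
    (hmom2 : ∀ t : ℤ, Integrable (fun ω => ∑ a, (u t ω a) ^ 2) μ) (t : ℤ) :
    Integrable (u t) μ := by
  refine Integrable.mono' (g := fun ω => 1 + ∑ a, (u t ω a) ^ 2)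
    (by exact (integrable_const (1 : ℝ)).add (hmom2 t))
    (hu_meas t).aestronglyMeasurable ?_
  filter_upwards with ω
  have hnn : (0 : ℝ) ≤ 1 + ∑ a, (u t ω a) ^ 2 := by positivity
  rw [pi_norm_le_iff_of_nonneg hnn]
  intro a
  have h1 : (u t ω a) ^ 2 ≤ ∑ b, (u t ω b) ^ 2 :=
    Finset.single_le_sum (f := fun b => (u t ω b) ^ 2) (fun b _ => sq_nonneg _)
      (Finset.mem_univ a)
  simp only [Real.norm_eq_abs]
  nlinarith [sq_nonneg (|u t ω a| - 1), abs_nonneg (u t ω a), sq_abs (u t ω a)]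

lemma integrable_dot_mul (hu_meas : ∀ t, Measurable (u t))
    (hmom2 : ∀ t : ℤ, Integrable (fun ω => ∑ a, (u t ω a) ^ 2) μ)
    (v w : Fin n → ℝ) (s t : ℤ) :
    Integrable (fun ω => (v ⬝ᵥ u s ω) * (w ⬝ᵥ u t ω)) μ := by
  refine Integrable.mono'
    (g := fun ω => ((∑ a, (v a) ^ 2) * ∑ a, (u s ω a) ^ 2
      + (∑ a, (w a) ^ 2) * ∑ a, (u t ω a) ^ 2) / 2)
    (by exact (((hmom2 s).const_mul _).add ((hmom2 t).const_mul _)).div_const 2)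
    (((measurable_dot hu_meas v s).mul (measurable_dot hu_meas w t)).aestronglyMeasurable) ?_
  filter_upwards with ω
  have hX : (v ⬝ᵥ u s ω) ^ 2 ≤ (∑ a, (v a) ^ 2) * ∑ a, (u s ω a) ^ 2 := by
    simpa [dotProduct] using
      Finset.sum_mul_sq_le_sq_mul_sq Finset.univ v (u s ω)
  have hY : (w ⬝ᵥ u t ω) ^ 2 ≤ (∑ a, (w a) ^ 2) * ∑ a, (u t ω a) ^ 2 := by
    simpa [dotProduct] using
      Finset.sum_mul_sq_le_sq_mul_sq Finset.univ w (u t ω)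
  rw [Real.norm_eq_abs, abs_mul]
  nlinarith [sq_nonneg (|v ⬝ᵥ u s ω| - |w ⬝ᵥ u t ω|), sq_abs (v ⬝ᵥ u s ω),
    sq_abs (w ⬝ᵥ u t ω), abs_nonneg (v ⬝ᵥ u s ω), abs_nonneg (w ⬝ᵥ u t ω)]

lemma integrable_dot (hu_meas : ∀ t, Measurable (u t))
    (hmom2 : ∀ t : ℤ, Integrable (fun ω => ∑ a, (u t ω a) ^ 2) μ)
    (w : Fin n → ℝ) (t : ℤ) :
    Integrable (fun ω => w ⬝ᵥ u t ω) μ := by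
  refine Integrable.mono'
    (g := fun ω => (1 + (∑ a, (w a) ^ 2) * ∑ a, (u t ω a) ^ 2) / 2)
    (by exact ((integrable_const 1).add ((hmom2 t).const_mul _)).div_const 2)
    ((measurable_dot hu_meas w t).aestronglyMeasurable) ?_
  filter_upwards with ω
  have hX : (w ⬝ᵥ u t ω) ^ 2 ≤ (∑ a, (w a) ^ 2) * ∑ a, (u t ω a) ^ 2 := by
    simpa [dotProduct] using
      Finset.sum_mul_sq_le_sq_mul_sq Finset.univ w (u t ω)
  rw [Real.norm_eq_abs]
  nlinarith [sq_nonneg (|w ⬝ᵥ u t ω| - 1), sq_abs (w ⬝ᵥ u t ω), abs_nonneg (w ⬝ᵥ u t ω)]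

/-- The conditional expectation of `w ⬝ u_t` given the future `σ(u_{t+1}, …)` vanishes. -/
lemma condexp_dot_future (hu_meas : ∀ t, Measurable (u t))
    (hmom2 : ∀ t : ℤ, Integrable (fun ω => ∑ a, (u t ω a) ^ 2) μ)
    (hA1 : Assumption1 μ u) (w : Fin n → ℝ) (t : ℤ) :
    μ[fun ω => w ⬝ᵥ u t ω | sigmaGen u {s : ℤ | t + 1 ≤ s}] =ᵐ[μ] 0 := by
  have hm : sigmaGen u {s : ℤ | t + 1 ≤ s} ≤ (inferInstance : MeasurableSpace Ω) :=
    sigmaGen_le hu_meas _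
  have hm' : sigmaGen u {s : ℤ | s ≠ t} ≤ (inferInstance : MeasurableSpace Ω) :=
    sigmaGen_le hu_meas _
  have hmm' : sigmaGen u {s : ℤ | t + 1 ≤ s} ≤ sigmaGen u {s : ℤ | s ≠ t} :=
    sigmaGen_mono (fun s hs => by simp only [Set.mem_setOf_eq] at hs ⊢; omega)
  have hInt_u : Integrable (u t) μ := integrable_u hu_meas hmom2 t
  have hInt : Integrable (fun ω => w ⬝ᵥ u t ω) μ := integrable_dot hu_meas hmom2 w t
  have hL : ∀ v : Fin n → ℝ,
      (∑ a, w a • ContinuousLinearMap.proj (R := ℝ) (φ := fun _ : Fin n => ℝ) a) v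
        = w ⬝ᵥ v := by
    intro v
    simp [ContinuousLinearMap.sum_apply, dotProduct]
  symm
  refine (ae_eq_condExp_of_forall_setIntegral_eq hm hInt
    (fun s _ _ => integrableOn_zero) (fun s hs _ => ?_)
    (aestronglyMeasurable_const))
  have hs' : MeasurableSet[sigmaGen u {s : ℤ | s ≠ t}] s := hmm' s hs
  have hset_u : ∫ x in s, u t x ∂μ = 0 := by
    rw [← setIntegral_condExp hm' hInt_u hs']
    calc ∫ x in s, (μ[u t|sigmaGen u {s : ℤ | s ≠ t}]) x ∂μ
        = ∫ x in s, (0 : Ω → Fin n → ℝ) x ∂μ :=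
          setIntegral_congr_ae (hm' s hs') ((hA1 t).mono fun x hx _ => hx)
      _ = 0 := by simp
  have hrw : ∫ x in s, w ⬝ᵥ u t x ∂μ
      = (∑ a, w a • ContinuousLinearMap.proj (R := ℝ) (φ := fun _ : Fin n => ℝ) a)
        (∫ x in s, u t x ∂μ) := by
    rw [← ContinuousLinearMap.integral_comp_comm _ hInt_u.integrableOn]
    exact setIntegral_congr_ae (hm' s hs')
      (Filter.Eventually.of_forall fun x _ => (hL _).symm)
  rw [hrw, hset_u]
  simp

/-- Main lemma: martingale difference property of the scores. -/
lemma condexp_xi_dot_future {p : ℕ} (hp : 0 < p)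
    (hu_meas : ∀ t, Measurable (u t))
    (hmom2 : ∀ t : ℤ, Integrable (fun ω => ∑ a, (u t ω a) ^ 2) μ)
    (hA1 : Assumption1 μ u)
    (A : Fin p → Matrix (Fin n) (Fin n) ℝ) (h : ℕ) (i : Fin n) (w : Fin n → ℝ) (t : ℤ) :
    μ[fun ω => xi hp A h i u t ω * (w ⬝ᵥ u t ω) | sigmaGen u {s : ℤ | t + 1 ≤ s}]
      =ᵐ[μ] 0 := by
  have hxi_meas : StronglyMeasurable[sigmaGen u {s : ℤ | t + 1 ≤ s}]
      (fun ω => xi hp A h i u t ω) := by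
    refine Measurable.stronglyMeasurable ?_
    unfold xi
    refine Finset.measurable_sum _ fun ℓ _ => ?_
    simp only [dotProduct]
    refine Finset.measurable_sum _ fun a _ => ?_
    have hmem : t + (ℓ : ℤ) + 1 ∈ {s : ℤ | t + 1 ≤ s} := by
      simp only [Set.mem_setOf_eq]; omega
    exact ((measurable_pi_apply a).comp (measurable_sigmaGen hmem)).const_mul _
  have hInt_g : Integrable (fun ω => w ⬝ᵥ u t ω) μ := integrable_dot hu_meas hmom2 w t
  have hprod_eq : ((fun ω => xi hp A h i u t ω) * fun ω => w ⬝ᵥ u t ω)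
      = fun ω => ∑ ℓ ∈ Finset.range h,
        (irf hp A (h - 1 - ℓ) i ⬝ᵥ u (t + (ℓ : ℤ) + 1) ω) * (w ⬝ᵥ u t ω) := by
    funext ω
    simp [xi, Finset.sum_mul]
  have hInt_fg : Integrable ((fun ω => xi hp A h i u t ω) * fun ω => w ⬝ᵥ u t ω) μ := by
    rw [hprod_eq]
    exact integrable_finset_sum _ fun ℓ _ => integrable_dot_mul hu_meas hmom2 _ _ _ _
  have hpull := condExp_mul_of_stronglyMeasurable_left hxi_meas hInt_fg hInt_g
  have hzero := condexp_dot_future hu_meas hmom2 hA1 w t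
  calc μ[fun ω => xi hp A h i u t ω * (w ⬝ᵥ u t ω)|sigmaGen u {s : ℤ | t + 1 ≤ s}]
      = μ[(fun ω => xi hp A h i u t ω) * fun ω => w ⬝ᵥ u t ω|
          sigmaGen u {s : ℤ | t + 1 ≤ s}] := rfl
    _ =ᵐ[μ] (fun ω => xi hp A h i u t ω)
        * μ[fun ω => w ⬝ᵥ u t ω|sigmaGen u {s : ℤ | t + 1 ≤ s}] := hpull
    _ =ᵐ[μ] 0 := by
        filter_upwards [hzero] with ω hω
        rw [Pi.mul_apply, hω]
        simp

end Aux

end LP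

open LP in
/-- Martingale difference property of the LP regression scores with respect to
the reversed-time filtration. -/
theorem statement14
    {Ω : Type} [MeasurableSpace Ω] (μ : Measure Ω) [IsProbabilityMeasure μ]
    (n p : ℕ) (hn : 0 < n) (hp : 0 < p)
    (u : ℤ → Ω → (Fin n → ℝ)) (hu_meas : ∀ t, Measurable (u t))
    (hu_stat : StrictlyStationary μ u)
    (hmom2 : ∀ t : ℤ, Integrable (fun ω => ∑ a, (u t ω a) ^ 2) μ)
    (hA1 : Assumption1 μ u)
    (A : Fin p → Matrix (Fin n) (Fin n) ℝ) (h : ℕ) (i : Fin n) (w : Fin n → ℝ) :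
    (∀ t : ℤ,
      μ[fun ω => xi hp A h i u t ω * (w ⬝ᵥ u t ω) | sigmaGen u {s : ℤ | t + 1 ≤ s}]
        =ᵐ[μ] 0) ∧
    (∀ T t : ℤ,
      μ[fun ω => xi hp A h i u (T - (h : ℤ) + 1 - t) ω * (w ⬝ᵥ u (T - (h : ℤ) + 1 - t) ω)
          | sigmaGen u {s : ℤ | T - (h : ℤ) + 2 - t ≤ s}]
        =ᵐ[μ] 0) := by
  constructor
  · intro t
    exact condexp_xi_dot_future hp hu_meas hmom2 hA1 A h i w t
  · intro T t
    have key := condexp_xi_dot_future hp hu_meas hmom2 hA1 A h i w (T - (h : ℤ) + 1 - t)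
    rwa [show (T - (h : ℤ) + 1 - t) + 1 = T - (h : ℤ) + 2 - t from by ring] at key
end
end

section
/- (Exact finite-sample decomposition of the lag-augmented local projection estimator.) Suppose the data y_1, …, y_T is generated by the VAR(p) model with coefficient matrix A. Fix a horizon h with 1 ≤ h < T, and suppose the matrices Σ_{t=1}^{T−h} X_t X_t' and Σ_{t=1}^{T−h} û_t(h) û_t(h)' are invertible. Then the lag-augmented local projection estimator satisfies the exact identity β̂_1(h) = β_1(A,h) + ( Σ_{t=1}^{T−h} û_t(h) û_t(h)' )^{−1} Σ_{t=1}^{T−h} û_t(h) ξ_{1,t}(A,h), where β̂_1(h) = ( Σ_{t=1}^{T−h} û_t(h) û_t(h)' )^{−1} Σ_{t=1}^{T−h} û_t(h) y_{1,t+h}. -/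
open MeasureTheory Filter Finset Matrix Topology

noncomputable section

namespace LP

variable {Ω : Type} [MeasurableSpace Ω] {n : ℕ}

/-- `Σ_{t=1}^{T−h} û_t(h) û_t(h)'`. -/
def uuMat (p : ℕ) (y : ℤ → Ω → (Fin n → ℝ)) (T h : ℕ) (ω : Ω) :
    Matrix (Fin n) (Fin n) ℝ :=
  Matrix.of fun a b => sumT T h fun t => uhat p y T h t ω a * uhat p y T h t ω b

/-- The lag-augmented LP estimator in its Frisch–Waugh form
`β̂_1(h) = (Σ û û')^{−1} Σ û y_{1,t+h}`. -/
def betaHatFW (p : ℕ) (hn : 0 < n) (y : ℤ → Ω → (Fin n → ℝ)) (T h : ℕ) (ω : Ω) :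
    Fin n → ℝ :=
  (uuMat p y T h ω)⁻¹.mulVec fun a =>
    sumT T h fun t => uhat p y T h t ω a * y (t + (h : ℤ)) ω ⟨0, hn⟩

end LP

namespace LPAux
open LP Matrix

variable {Ω : Type} [MeasurableSpace Ω] {n p : ℕ}

/-- Companion-form state vector `(y_t', y_{t-1}', …, y_{t-p+1}')'`. -/
def Yvec (p : ℕ) (y : ℤ → Ω → (Fin n → ℝ)) (t : ℤ) (ω : Ω) : Fin p × Fin n → ℝ :=
  fun q => y (t - ((q.1 : ℕ) : ℤ)) ω q.2

/-- Embedding `J' v` of a vector into the first block of the companion state. -/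
def emb (p : ℕ) (v : Fin n → ℝ) : Fin p × Fin n → ℝ :=
  fun q => if (q.1 : ℕ) = 0 then v q.2 else 0

lemma companion_step {u : ℤ → Ω → (Fin n → ℝ)} {A : Fin p → Matrix (Fin n) (Fin n) ℝ}
    {y : ℤ → Ω → (Fin n → ℝ)} (hy : IsVARProcess u A y) (ω : Ω)
    {t : ℤ} (ht : 1 ≤ t) :
    Yvec p y t ω = (companion A).mulVec (Yvec p y (t - 1) ω) + emb p (u t ω) := by
  funext q
  obtain ⟨⟨j, hj⟩, a⟩ := q
  simp only [Matrix.mulVec, dotProduct, companion, Pi.add_apply, Matrix.of_apply]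
  cases j with
  | zero =>
      have hrec := congrFun (hy.2 t ht ω) a
      simp only [Pi.add_apply, Finset.sum_apply] at hrec
      simp only [Yvec, emb, Fin.val_mk, if_pos rfl, Nat.cast_zero, sub_zero]
      rw [hrec]
      congr 1
      rw [Fintype.sum_prod_type]
      refine Finset.sum_congr rfl fun ℓ _ => ?_
      simp only [Matrix.mulVec, dotProduct]
      refine Finset.sum_congr rfl fun b _ => ?_
      congr 2
      ring
  | succ k =>
      have hk : k < p := Nat.lt_of_succ_lt hj
      have hne : ¬ (k + 1 = 0) := Nat.succ_ne_zero k
      simp only [Yvec, emb, Fin.val_mk, if_neg hne, add_zero]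
      rw [Finset.sum_eq_single (⟨⟨k, hk⟩, a⟩ : Fin p × Fin n)]
      · simp only [Fin.val_mk, if_neg hne, if_pos rfl, if_true, one_mul]
        have e1 : t - ((k + 1 : ℕ) : ℤ) = t - 1 - (k : ℕ) := by push_cast; ring
        rw [e1]
      · intro r _ hr
        rcases eq_or_ne ((r.1 : ℕ)) k with h1 | h1
        · rcases eq_or_ne a r.2 with h2 | h2
          · exfalso
            apply hr
            ext
            · exact h1
            · exact congrArg Fin.val h2.symm
          · rw [if_pos (by omega), if_neg h2, zero_mul]
        · rw [if_neg (by omega), zero_mul]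
      · intro habs
        exact absurd (Finset.mem_univ _) habs

lemma Yvec_iter {u : ℤ → Ω → (Fin n → ℝ)} {A : Fin p → Matrix (Fin n) (Fin n) ℝ}
    {y : ℤ → Ω → (Fin n → ℝ)} (hy : IsVARProcess u A y) (ω : Ω) (h : ℕ) :
    ∀ t : ℤ, 0 ≤ t →
      Yvec p y (t + (h : ℤ)) ω = ((companion A) ^ h).mulVec (Yvec p y t ω)
        + ∑ ℓ ∈ Finset.range h,
            ((companion A) ^ (h - 1 - ℓ)).mulVec (emb p (u (t + (ℓ : ℤ) + 1) ω)) := by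
  induction h with
  | zero =>
      intro t ht
      simp
  | succ h ih =>
      intro t ht
      have e1 : t + ((h + 1 : ℕ) : ℤ) = (t + 1) + (h : ℕ) := by push_cast; ring
      rw [e1, ih (t + 1) (by omega), companion_step hy ω (t := t + 1) (by omega),
        add_sub_cancel_right, Matrix.mulVec_add, Matrix.mulVec_mulVec]
      have hsum : ∑ ℓ ∈ Finset.range (h + 1),
            ((companion A) ^ (h + 1 - 1 - ℓ)).mulVec (emb p (u (t + (ℓ : ℤ) + 1) ω))
          = (∑ ℓ ∈ Finset.range h,
                ((companion A) ^ (h - 1 - ℓ)).mulVec (emb p (u ((t + 1) + (ℓ : ℤ) + 1) ω)))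
            + ((companion A) ^ h).mulVec (emb p (u (t + 1) ω)) := by
        rw [Finset.sum_range_succ']
        congr 1
        · refine Finset.sum_congr rfl fun i _ => ?_
          have e2 : h + 1 - 1 - (i + 1) = h - 1 - i := by omega
          have e3 : t + ((i + 1 : ℕ) : ℤ) + 1 = (t + 1) + (i : ℤ) + 1 := by push_cast; ring
          rw [e2, e3]
        · have e4 : h + 1 - 1 - 0 = h := by omega
          have e5 : t + ((0 : ℕ) : ℤ) + 1 = t + 1 := by push_cast; ring
          rw [e4, e5]
      rw [hsum, ← pow_succ]
      abel

lemma mulVec_emb (M : Matrix (Fin p × Fin n) (Fin p × Fin n) ℝ) (hp : 0 < p)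
    (v : Fin n → ℝ) (q : Fin p × Fin n) :
    M.mulVec (emb p v) q = ∑ b, M q (⟨0, hp⟩, b) * v b := by
  simp only [Matrix.mulVec, dotProduct, emb, mul_ite, mul_zero]
  rw [Fintype.sum_prod_type, Finset.sum_eq_single (⟨0, hp⟩ : Fin p)]
  · simp
  · intro j _ hj
    have hj' : ¬ ((j : ℕ) = 0) := fun hh => hj (Fin.ext hh)
    simp [hj']
  · simp

/-- Exact multi-step representation of the first variable. -/
lemma rep (hn : 0 < n) (hp : 0 < p) {u : ℤ → Ω → (Fin n → ℝ)}
    {A : Fin p → Matrix (Fin n) (Fin n) ℝ} {y : ℤ → Ω → (Fin n → ℝ)}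
    (hy : IsVARProcess u A y) (ω : Ω) (h : ℕ) (t : ℤ) (ht : 0 ≤ t) :
    y (t + (h : ℤ)) ω ⟨0, hn⟩
      = (∑ r : Fin p × Fin n,
            ((companion A) ^ h) (⟨0, hp⟩, ⟨0, hn⟩) r * Yvec p y t ω r)
        + xi hp A h ⟨0, hn⟩ u t ω := by
  have hIt := congrFun (Yvec_iter hy ω h t ht) (⟨0, hp⟩, ⟨0, hn⟩)
  have hL : Yvec p y (t + (h : ℤ)) ω (⟨0, hp⟩, ⟨0, hn⟩) = y (t + (h : ℤ)) ω ⟨0, hn⟩ := by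
    simp [Yvec]
  rw [hL] at hIt
  rw [hIt]
  simp only [Pi.add_apply, Finset.sum_apply]
  congr 1
  unfold xi irf
  refine Finset.sum_congr rfl fun ℓ _ => ?_
  rw [mulVec_emb _ hp]
  rfl

lemma uhat_orth (p : ℕ) (y : ℤ → Ω → (Fin n → ℝ)) (T h : ℕ) (ω : Ω)
    (hXX : IsUnit (XXhmat p y T h ω).det) (a : Fin n) (q : Fin p × Fin n) :
    (sumT T h fun t => uhat p y T h t ω a * Xt p y t ω q) = 0 := by
  have hA : Ahat p y T h ω * XXhmat p y T h ω
      = Matrix.of fun a q => sumT T h fun t => y t ω a * Xt p y t ω q := by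
    unfold Ahat
    rw [Matrix.mul_assoc, Matrix.nonsing_inv_mul _ hXX, Matrix.mul_one]
  have h2 : (sumT T h fun t => (Ahat p y T h ω).mulVec (Xt p y t ω) a * Xt p y t ω q)
      = (Ahat p y T h ω * XXhmat p y T h ω) a q := by
    rw [Matrix.mul_apply]
    simp only [sumT, XXhmat, Matrix.of_apply, Matrix.mulVec, dotProduct, Finset.sum_mul,
      Finset.mul_sum, mul_assoc]
    exact Finset.sum_comm
  have h3 : (sumT T h fun t => uhat p y T h t ω a * Xt p y t ω q)
      = (sumT T h fun t => y t ω a * Xt p y t ω q)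
        - sumT T h fun t => (Ahat p y T h ω).mulVec (Xt p y t ω) a * Xt p y t ω q := by
    unfold sumT
    rw [← Finset.sum_sub_distrib]
    refine Finset.sum_congr rfl fun s _ => ?_
    simp only [uhat]
    ring
  rw [h3, h2, hA, Matrix.of_apply, sub_self]

lemma uhat_y (p : ℕ) (y : ℤ → Ω → (Fin n → ℝ)) (T h : ℕ) (ω : Ω)
    (hXX : IsUnit (XXhmat p y T h ω).det) (a b : Fin n) :
    (sumT T h fun t => uhat p y T h t ω a * y t ω b) = uuMat p y T h ω a b := by
  have key : ∀ t : ℤ, uhat p y T h t ω a * y t ω b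
      = uhat p y T h t ω a * uhat p y T h t ω b
        + ∑ q, Ahat p y T h ω b q * (uhat p y T h t ω a * Xt p y t ω q) := by
    intro t
    have hyt : y t ω b = uhat p y T h t ω b + (Ahat p y T h ω).mulVec (Xt p y t ω) b := by
      simp [uhat]
    rw [hyt, mul_add]
    congr 1
    simp only [Matrix.mulVec, dotProduct, Finset.mul_sum]
    exact Finset.sum_congr rfl fun q _ => by ring
  have hzero : (∑ q, Ahat p y T h ω b q
        * sumT T h fun t => uhat p y T h t ω a * Xt p y t ω q) = 0 := by
    refine Finset.sum_eq_zero fun q _ => ?_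
    rw [uhat_orth p y T h ω hXX a q, mul_zero]
  unfold sumT at hzero ⊢
  calc (∑ s ∈ Finset.range (T - h), uhat p y T h ((s : ℤ) + 1) ω a * y ((s : ℤ) + 1) ω b)
      = (∑ s ∈ Finset.range (T - h),
          uhat p y T h ((s : ℤ) + 1) ω a * uhat p y T h ((s : ℤ) + 1) ω b)
        + ∑ s ∈ Finset.range (T - h), ∑ q, Ahat p y T h ω b q
            * (uhat p y T h ((s : ℤ) + 1) ω a * Xt p y ((s : ℤ) + 1) ω q) := by
        rw [← Finset.sum_add_distrib]
        exact Finset.sum_congr rfl fun s _ => key _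
    _ = uuMat p y T h ω a b := by
        rw [Finset.sum_comm]
        simp only [← Finset.mul_sum]
        rw [hzero, add_zero]
        rfl

lemma uhat_Yvec (p : ℕ) (y : ℤ → Ω → (Fin n → ℝ)) (T h : ℕ) (ω : Ω)
    (hXX : IsUnit (XXhmat p y T h ω).det) (a : Fin n) (r : Fin p × Fin n) :
    (sumT T h fun t => uhat p y T h t ω a * Yvec p y t ω r)
      = if (r.1 : ℕ) = 0 then uuMat p y T h ω a r.2 else 0 := by
  obtain ⟨⟨j, hj⟩, b⟩ := r
  cases j with
  | zero =>
      rw [if_pos rfl]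
      have hY : ∀ t : ℤ, Yvec p y t ω (⟨0, hj⟩, b) = y t ω b := by
        intro t; simp [Yvec]
      calc (sumT T h fun t => uhat p y T h t ω a * Yvec p y t ω (⟨0, hj⟩, b))
          = sumT T h fun t => uhat p y T h t ω a * y t ω b := by
            unfold sumT
            exact Finset.sum_congr rfl fun s _ => by simp only [hY]
        _ = uuMat p y T h ω a b := uhat_y p y T h ω hXX a b
  | succ k =>
      have hk : k < p := Nat.lt_of_succ_lt hj
      rw [if_neg (Nat.succ_ne_zero k)]
      have hY : ∀ t : ℤ, Yvec p y t ω (⟨k + 1, hj⟩, b) = Xt p y t ω (⟨k, hk⟩, b) := by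
        intro t
        have e : t - ((k + 1 : ℕ) : ℤ) = t - (((k : ℕ) : ℤ) + 1) := by push_cast; ring
        simp only [Yvec, Xt, Fin.val_mk, e]
      calc (sumT T h fun t => uhat p y T h t ω a * Yvec p y t ω (⟨k + 1, hj⟩, b))
          = sumT T h fun t => uhat p y T h t ω a * Xt p y t ω (⟨k, hk⟩, b) := by
            unfold sumT
            exact Finset.sum_congr rfl fun s _ => by simp only [hY]
        _ = 0 := uhat_orth p y T h ω hXX a _

end LPAux

open LP in
/-- Exact finite-sample decomposition of the lag-augmented LP estimator:
`β̂_1(h) = β_1(A,h) + (Σ û û')^{−1} Σ û_t(h) ξ_{1,t}(A,h)`. -/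
theorem statement15
    {Ω : Type} [MeasurableSpace Ω]
    (n p : ℕ) (hn : 0 < n) (hp : 0 < p)
    (u : ℤ → Ω → (Fin n → ℝ))
    (A : Fin p → Matrix (Fin n) (Fin n) ℝ)
    (y : ℤ → Ω → (Fin n → ℝ)) (hy : IsVARProcess u A y)
    (T h : ℕ) (hh1 : 1 ≤ h) (hhT : h < T) (ω : Ω)
    (hXX : IsUnit (XXhmat p y T h ω).det)
    (huu : IsUnit (uuMat p y T h ω).det) :
    betaHatFW p hn y T h ω
      = irf hp A h ⟨0, hn⟩ +
        (uuMat p y T h ω)⁻¹.mulVec fun a =>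
          sumT T h fun t => uhat p y T h t ω a * xi hp A h ⟨0, hn⟩ u t ω := by
  classical
  have key : (fun a => sumT T h fun t => uhat p y T h t ω a * y (t + (h : ℤ)) ω ⟨0, hn⟩)
      = (uuMat p y T h ω).mulVec (irf hp A h ⟨0, hn⟩)
        + fun a => sumT T h fun t => uhat p y T h t ω a * xi hp A h ⟨0, hn⟩ u t ω := by
    funext a
    have h1 : (sumT T h fun t => uhat p y T h t ω a * y (t + (h : ℤ)) ω ⟨0, hn⟩)
        = (sumT T h fun t => ∑ r, ((companion A) ^ h) (⟨0, hp⟩, ⟨0, hn⟩) r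
              * (uhat p y T h t ω a * LPAux.Yvec p y t ω r))
          + sumT T h fun t => uhat p y T h t ω a * xi hp A h ⟨0, hn⟩ u t ω := by
      unfold sumT
      rw [← Finset.sum_add_distrib]
      refine Finset.sum_congr rfl fun s _ => ?_
      beta_reduce
      rw [LPAux.rep hn hp hy ω h ((s : ℤ) + 1) (by positivity), mul_add]
      congr 1
      rw [Finset.mul_sum]
      exact Finset.sum_congr rfl fun r _ => by ring
    have h2 : (sumT T h fun t => ∑ r, ((companion A) ^ h) (⟨0, hp⟩, ⟨0, hn⟩) r
            * (uhat p y T h t ω a * LPAux.Yvec p y t ω r))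
        = ∑ r, ((companion A) ^ h) (⟨0, hp⟩, ⟨0, hn⟩) r
            * sumT T h fun t => uhat p y T h t ω a * LPAux.Yvec p y t ω r := by
      unfold sumT
      rw [Finset.sum_comm]
      exact Finset.sum_congr rfl fun r _ => by rw [Finset.mul_sum]
    have h3 : (∑ r, ((companion A) ^ h) (⟨0, hp⟩, ⟨0, hn⟩) r
            * sumT T h fun t => uhat p y T h t ω a * LPAux.Yvec p y t ω r)
        = (uuMat p y T h ω).mulVec (irf hp A h ⟨0, hn⟩) a := by
      have hv := fun r => LPAux.uhat_Yvec p y T h ω hXX a r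
      simp only [hv, mul_ite, mul_zero]
      rw [Fintype.sum_prod_type, Finset.sum_eq_single (⟨0, hp⟩ : Fin p)]
      · simp only [Matrix.mulVec, dotProduct]
        refine Finset.sum_congr rfl fun b _ => ?_
        simp only [Fin.val_mk, if_pos rfl, if_true]
        rw [mul_comm]
        rfl
      · intro j _ hj
        have hj' : ¬ ((j : ℕ) = 0) := fun hh => hj (Fin.ext hh)
        simp [hj']
      · simp
    rw [h1, h2, h3]
    rfl
  unfold betaHatFW
  rw [key, Matrix.mulVec_add, Matrix.mulVec_mulVec, Matrix.nonsing_inv_mul _ huu,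
    Matrix.one_mulVec]
end
end

section
/- (Relative asymptotic efficiency of lag-augmented LP versus lag-augmented AR.) Let h ≥ 1 be an integer and ρ a real number with 0 < |ρ| < 1. Then Σ_{ℓ=0}^{h−1} ρ^{2ℓ} ≤ (h ρ^{h−1})² if and only if Σ_{m=0}^{h−1} ρ^{−2m} ≤ h². Moreover, for each integer h ≥ 2, the map r ↦ Σ_{m=0}^{h−1} r^{−2m} is strictly decreasing on (0,1] with limit +∞ as r → 0+ and value h at r = 1, so there exists a unique ρ̲(h) ∈ (0,1) such that Σ_{m=0}^{h−1} ρ̲(h)^{−2m} = h², and for all ρ with 0 < |ρ| < 1: Σ_{m=0}^{h−1} |ρ|^{−2m} ≤ h² if and only if |ρ| ≥ ρ̲(h). -/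
open Filter Finset Topology

private lemma sum_reflect16 (h : ℕ) (ρ : ℝ) (hρ : ρ ≠ 0) :
    ∑ ℓ ∈ Finset.range h, ρ ^ (2 * ℓ)
      = ρ ^ (2 * (h - 1)) * ∑ m ∈ Finset.range h, (ρ ^ (2 * m))⁻¹ := by
  rw [Finset.mul_sum, ← Finset.sum_range_reflect (fun ℓ => ρ ^ (2 * ℓ)) h]
  refine Finset.sum_congr rfl fun j hj => ?_
  rw [Finset.mem_range] at hj
  have hp : ρ ^ (2 * j) ≠ 0 := pow_ne_zero _ hρ
  field_simp
  rw [← pow_add]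
  congr 1
  omega

private lemma iff16 (h : ℕ) (ρ : ℝ) (h1 : 1 ≤ h) (hρ : ρ ≠ 0) :
    (∑ ℓ ∈ Finset.range h, ρ ^ (2 * ℓ)) ≤ ((h : ℝ) * ρ ^ (h - 1)) ^ 2 ↔
      (∑ m ∈ Finset.range h, (ρ ^ (2 * m))⁻¹) ≤ (h : ℝ) ^ 2 := by
  have hp : 0 < ρ ^ (2 * (h - 1)) := by
    rw [mul_comm, pow_mul]
    exact pow_two_pos_of_ne_zero (pow_ne_zero _ hρ)
  rw [sum_reflect16 h ρ hρ, mul_pow, ← pow_mul, mul_comm (h-1) 2,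
    mul_comm ((h:ℝ)^2) _, mul_le_mul_iff_right₀ hp]

private lemma anti16 (h : ℕ) (h2 : 2 ≤ h) :
    StrictAntiOn (fun r : ℝ => ∑ m ∈ Finset.range h, (r ^ (2 * m))⁻¹) (Set.Ioc 0 1) := by
  intro x hx y hy hxy
  apply Finset.sum_lt_sum
  · intro m _
    exact inv_anti₀ (pow_pos hx.1 _) (pow_le_pow_left₀ hx.1.le hxy.le _)
  · refine ⟨1, Finset.mem_range.2 (by omega), ?_⟩
    simp only [mul_one]
    exact inv_strictAnti₀ (pow_pos hx.1 2) (pow_lt_pow_left₀ hxy hx.1.le two_ne_zero)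

/-- Relative asymptotic efficiency of lag-augmented LP versus lag-augmented AR
in the stationary homoskedastic AR(1) model: the variance comparison
`Σ_{ℓ=0}^{h−1} ρ^{2ℓ} ≤ (h ρ^{h−1})²` is equivalent to `Σ_{m=0}^{h−1} ρ^{−2m} ≤ h²`;
and for each `h ≥ 2` there is a unique cutoff `ρ̲(h) ∈ (0,1)` characterizing it. -/
theorem statement16 :
    (∀ (h : ℕ) (ρ : ℝ), 1 ≤ h → 0 < |ρ| → |ρ| < 1 →
      ((∑ ℓ ∈ Finset.range h, ρ ^ (2 * ℓ)) ≤ ((h : ℝ) * ρ ^ (h - 1)) ^ 2 ↔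
        (∑ m ∈ Finset.range h, (ρ ^ (2 * m))⁻¹) ≤ (h : ℝ) ^ 2)) ∧
    (∀ h : ℕ, 2 ≤ h →
      StrictAntiOn (fun r : ℝ => ∑ m ∈ Finset.range h, (r ^ (2 * m))⁻¹) (Set.Ioc 0 1) ∧
      Tendsto (fun r : ℝ => ∑ m ∈ Finset.range h, (r ^ (2 * m))⁻¹) (𝓝[>] 0) atTop ∧
      (∑ m ∈ Finset.range h, ((1 : ℝ) ^ (2 * m))⁻¹) = (h : ℝ) ∧
      ∃ c : ℝ, c ∈ Set.Ioo (0 : ℝ) 1 ∧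
        (∑ m ∈ Finset.range h, (c ^ (2 * m))⁻¹) = (h : ℝ) ^ 2 ∧
        (∀ c' ∈ Set.Ioo (0 : ℝ) 1,
          (∑ m ∈ Finset.range h, (c' ^ (2 * m))⁻¹) = (h : ℝ) ^ 2 → c' = c) ∧
        (∀ ρ : ℝ, 0 < |ρ| → |ρ| < 1 →
          ((∑ m ∈ Finset.range h, (|ρ| ^ (2 * m))⁻¹) ≤ (h : ℝ) ^ 2 ↔ c ≤ |ρ|))) := by
  constructor
  · intro h ρ h1 hρ0 _
    exact iff16 h ρ h1 (abs_pos.mp hρ0)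
  · intro h h2
    set f : ℝ → ℝ := fun r => ∑ m ∈ Finset.range h, (r ^ (2 * m))⁻¹ with hf
    have hanti := anti16 h h2
    have htend : Tendsto f (𝓝[>] (0:ℝ)) atTop := by
      have hsq : Tendsto (fun r : ℝ => (r ^ 2)⁻¹) (𝓝[>] (0:ℝ)) atTop := by
        have h0 : Tendsto (fun r : ℝ => r⁻¹) (𝓝[>] (0:ℝ)) atTop := tendsto_inv_nhdsGT_zero
        have := (tendsto_pow_atTop (two_ne_zero)).comp h0
        simpa [Function.comp_def, ← inv_pow] using this
      apply tendsto_atTop_mono' _ _ hsq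
      filter_upwards [self_mem_nhdsWithin] with r (hr : (0:ℝ) < r)
      have : (r ^ (2 * 1))⁻¹ ≤ f r := by
        apply Finset.single_le_sum (f := fun m => (r ^ (2 * m))⁻¹)
        · intro m _; positivity
        · exact Finset.mem_range.2 (by omega)
      simpa using this
    have hone : f 1 = (h : ℝ) := by simp [hf]
    refine ⟨hanti, htend, by simpa using hone, ?_⟩
    have hhlt : (h : ℝ) < (h : ℝ) ^ 2 := by
      have : (2:ℝ) ≤ (h : ℝ) := by exact_mod_cast h2
      nlinarith
    -- find r0 ∈ (0,1) with f r0 ≥ h²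
    obtain ⟨r0, hr0f, hr0mem⟩ :
        ∃ r0 : ℝ, (h : ℝ) ^ 2 ≤ f r0 ∧ r0 ∈ Set.Ioo (0:ℝ) 1 := by
      have h1 : ∀ᶠ r in 𝓝[>] (0:ℝ), (h : ℝ) ^ 2 ≤ f r := htend.eventually_ge_atTop _
      have h2' : ∀ᶠ r in 𝓝[>] (0:ℝ), r ∈ Set.Ioo (0:ℝ) 1 :=
        Ioo_mem_nhdsGT_of_mem ⟨le_refl 0, one_pos⟩
      exact (h1.and h2').exists
    have hcont : ContinuousOn f (Set.Icc r0 1) := by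
      apply continuousOn_finset_sum
      intro m _
      exact (continuous_pow (2 * m)).continuousOn.inv₀ fun x hx =>
        pow_ne_zero _ (ne_of_gt (lt_of_lt_of_le hr0mem.1 hx.1))
    have hsub := intermediate_value_Icc' hr0mem.2.le hcont
    have hmem : (h : ℝ) ^ 2 ∈ Set.Icc (f 1) (f r0) := ⟨by rw [hone]; exact hhlt.le, hr0f⟩
    obtain ⟨c, hcmem, hcval⟩ := hsub hmem
    have hcIoo : c ∈ Set.Ioo (0:ℝ) 1 := by
      refine ⟨lt_of_lt_of_le hr0mem.1 hcmem.1, lt_of_le_of_ne hcmem.2 ?_⟩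
      intro hc1
      rw [hc1, hone] at hcval
      exact absurd hcval.symm (ne_of_gt hhlt)
    have hcIoc : c ∈ Set.Ioc (0:ℝ) 1 := ⟨hcIoo.1, hcIoo.2.le⟩
    refine ⟨c, hcIoo, hcval, ?_, ?_⟩
    · intro c' hc' hval
      exact hanti.injOn ⟨hc'.1, hc'.2.le⟩ hcIoc (hval.trans hcval.symm)
    · intro ρ hρ0 hρ1
      have hρIoc : |ρ| ∈ Set.Ioc (0:ℝ) 1 := ⟨hρ0, hρ1.le⟩
      rw [← hcval]
      exact hanti.le_iff_ge hρIoc hcIoc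
end

section
/- (Existence of the efficiency cutoff between lag-augmented and non-augmented LP.) For each integer h ≥ 2, the map r ↦ Σ_{ℓ=1}^{h−1} r^{−2ℓ} is strictly decreasing on (0,1) with limit +∞ as r → 0+ and limit h−1 < 2h−1 as r → 1−; hence there exists a unique ρ̄(h) ∈ (0,1) such that Σ_{ℓ=1}^{h−1} ρ̄(h)^{−2ℓ} = 2h−1, and for all ρ with 0 < |ρ| < 1: Σ_{ℓ=1}^{h−1} |ρ|^{−2ℓ} ≥ 2h−1 if and only if |ρ| ≤ ρ̄(h). Equivalently, the asymptotic variance of lag-augmented LP, Σ_{ℓ=0}^{h−1} ρ^{2ℓ}, is at most that of non-augmented LP, Σ_{ℓ=0}^{h−1} ρ^{2ℓ} + Σ_{ℓ=1}^{h−1} ρ^{2ℓ} − (2h−1)ρ^{2h}, if and only if |ρ| ≤ ρ̄(h). -/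
open Filter Finset Topology

/-- Existence of the efficiency cutoff between lag-augmented and non-augmented
LP in the stationary homoskedastic AR(1) model: for each `h ≥ 2` the map
`r ↦ Σ_{ℓ=1}^{h−1} r^{−2ℓ}` is strictly decreasing on `(0,1)`, blows up at `0+`,
tends to `h−1 < 2h−1` at `1−`; hence there is a unique `ρ̄(h) ∈ (0,1)` with
`Σ_{ℓ=1}^{h−1} ρ̄(h)^{−2ℓ} = 2h−1`, and for `0 < |ρ| < 1` the lag-augmented LP
asymptotic variance is at most the non-augmented one iff `|ρ| ≤ ρ̄(h)`. -/
theorem statement18 (h : ℕ) (hh : 2 ≤ h) :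
    StrictAntiOn (fun r : ℝ => ∑ ℓ ∈ Finset.Icc 1 (h - 1), (r ^ (2 * ℓ))⁻¹)
      (Set.Ioo 0 1) ∧
    Tendsto (fun r : ℝ => ∑ ℓ ∈ Finset.Icc 1 (h - 1), (r ^ (2 * ℓ))⁻¹)
      (𝓝[>] 0) atTop ∧
    Tendsto (fun r : ℝ => ∑ ℓ ∈ Finset.Icc 1 (h - 1), (r ^ (2 * ℓ))⁻¹)
      (𝓝[<] 1) (𝓝 ((h : ℝ) - 1)) ∧
    ((h : ℝ) - 1 < 2 * (h : ℝ) - 1) ∧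
    ∃ c : ℝ, c ∈ Set.Ioo (0 : ℝ) 1 ∧
      (∑ ℓ ∈ Finset.Icc 1 (h - 1), (c ^ (2 * ℓ))⁻¹) = 2 * (h : ℝ) - 1 ∧
      (∀ c' ∈ Set.Ioo (0 : ℝ) 1,
        (∑ ℓ ∈ Finset.Icc 1 (h - 1), (c' ^ (2 * ℓ))⁻¹) = 2 * (h : ℝ) - 1 → c' = c) ∧
      (∀ ρ : ℝ, 0 < |ρ| → |ρ| < 1 →
        ((2 * (h : ℝ) - 1 ≤ ∑ ℓ ∈ Finset.Icc 1 (h - 1), (|ρ| ^ (2 * ℓ))⁻¹) ↔ |ρ| ≤ c)) ∧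
      (∀ ρ : ℝ, 0 < |ρ| → |ρ| < 1 →
        ((∑ ℓ ∈ Finset.range h, ρ ^ (2 * ℓ))
            ≤ (∑ ℓ ∈ Finset.range h, ρ ^ (2 * ℓ)) +
                (∑ ℓ ∈ Finset.Icc 1 (h - 1), ρ ^ (2 * ℓ)) -
                (2 * (h : ℝ) - 1) * ρ ^ (2 * h) ↔ |ρ| ≤ c)) := by
  have hne : (Finset.Icc 1 (h - 1)).Nonempty := ⟨1, by simp; omega⟩
  set f : ℝ → ℝ := fun r => ∑ ℓ ∈ Finset.Icc 1 (h - 1), (r ^ (2 * ℓ))⁻¹ with hfdef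
  -- strict antitonicity
  have hanti : StrictAntiOn f (Set.Ioo 0 1) := by
    intro x hx y hy hxy
    refine Finset.sum_lt_sum_of_nonempty hne ?_
    intro ℓ hℓ
    simp only [Finset.mem_Icc] at hℓ
    have hx0 : (0:ℝ) < x ^ (2*ℓ) := pow_pos hx.1 _
    have hlt : x ^ (2*ℓ) < y ^ (2*ℓ) :=
      pow_lt_pow_left₀ hxy hx.1.le (by omega)
    exact inv_strictAnti₀ hx0 hlt
  -- blow-up at 0+
  have h0 : Tendsto f (𝓝[>] (0:ℝ)) atTop := by
    have h1 : Tendsto (fun r : ℝ => (r ^ (2*1))⁻¹) (𝓝[>] (0:ℝ)) atTop := by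
      apply tendsto_inv_nhdsGT_zero.comp
      apply tendsto_nhdsWithin_of_tendsto_nhds_of_eventually_within
      · have := (continuous_pow (2*1)).tendsto (0:ℝ)
        simpa using this.mono_left nhdsWithin_le_nhds
      · filter_upwards [self_mem_nhdsWithin] with r hr
        exact pow_pos (show (0:ℝ) < r from hr) _
    refine tendsto_atTop_mono' _ ?_ h1
    filter_upwards [self_mem_nhdsWithin] with r hr
    exact Finset.single_le_sum (f := fun ℓ => (r ^ (2*ℓ))⁻¹)
      (fun i _ => by have hr0 : (0:ℝ) < r := hr; positivity) (by simp [Finset.mem_Icc]; omega)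
  -- limit at 1-
  have hsum1 : (∑ _ℓ ∈ Finset.Icc 1 (h-1), (1:ℝ)) = (h:ℝ) - 1 := by
    rw [Finset.sum_const, nsmul_eq_mul, mul_one, Nat.card_Icc]
    rw [show h - 1 + 1 - 1 = h - 1 by omega, Nat.cast_sub (by omega)]
    norm_num
  have hlim : Tendsto f (𝓝[<] (1:ℝ)) (𝓝 ((h:ℝ) - 1)) := by
    rw [← hsum1]
    apply tendsto_finset_sum
    intro ℓ _
    have hc : ContinuousAt (fun r : ℝ => (r ^ (2*ℓ))⁻¹) 1 :=
      ((continuous_pow (2*ℓ)).continuousAt).inv₀ (by norm_num)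
    have := hc.tendsto.mono_left (nhdsWithin_le_nhds (s := Set.Iio (1:ℝ)))
    simpa using this
  have h2h : (2:ℝ) ≤ (h:ℝ) := by exact_mod_cast hh
  refine ⟨hanti, h0, hlim, by linarith, ?_⟩
  -- find a with f a large
  obtain ⟨a, ha01, hfa⟩ : ∃ a, a ∈ Set.Ioo (0:ℝ) 1 ∧ 2*(h:ℝ)-1 ≤ f a := by
    have e1 : ∀ᶠ r in 𝓝[>] (0:ℝ), 2*(h:ℝ)-1 ≤ f r := h0.eventually_ge_atTop _
    have e2 : ∀ᶠ r in 𝓝[>] (0:ℝ), r < 1 :=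
      (eventually_lt_nhds zero_lt_one).filter_mono nhdsWithin_le_nhds
    have e3 : ∀ᶠ r in 𝓝[>] (0:ℝ), r ∈ Set.Ioo (0:ℝ) 1 ∧ 2*(h:ℝ)-1 ≤ f r := by
      filter_upwards [self_mem_nhdsWithin, e1, e2] with r hr h1 h2
      exact ⟨⟨hr, h2⟩, h1⟩
    exact e3.exists
  -- find b with f b small, a < b
  obtain ⟨b, hb01, hab, hfb⟩ : ∃ b, b ∈ Set.Ioo (0:ℝ) 1 ∧ a < b ∧ f b ≤ 2*(h:ℝ)-1 := by
    have e1 : ∀ᶠ r in 𝓝[<] (1:ℝ), f r < 2*(h:ℝ)-1 :=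
      hlim.eventually_lt_const (by linarith)
    have e2 : ∀ᶠ r in 𝓝[<] (1:ℝ), a < r :=
      (eventually_gt_nhds ha01.2).filter_mono nhdsWithin_le_nhds
    have e3 : ∀ᶠ r in 𝓝[<] (1:ℝ), (r ∈ Set.Ioo (0:ℝ) 1 ∧ a < r) ∧ f r ≤ 2*(h:ℝ)-1 := by
      filter_upwards [self_mem_nhdsWithin, e1, e2] with r hr h1 h2
      exact ⟨⟨⟨lt_trans ha01.1 h2, hr⟩, h2⟩, h1.le⟩
    obtain ⟨b, ⟨hb01, hab⟩, hfb⟩ := e3.exists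
    exact ⟨b, hb01, hab, hfb⟩
  -- IVT
  have hconts : ContinuousOn f (Set.Icc a b) := by
    apply continuousOn_finset_sum
    intro ℓ _
    refine ContinuousOn.inv₀ (continuous_pow (2*ℓ)).continuousOn ?_
    intro r hr
    exact pow_ne_zero _ (ne_of_gt (lt_of_lt_of_le ha01.1 hr.1))
  obtain ⟨c, hcmem, hfc⟩ := intermediate_value_Icc' hab.le hconts ⟨hfb, hfa⟩
  have hcIoo : c ∈ Set.Ioo (0:ℝ) 1 :=
    ⟨lt_of_lt_of_le ha01.1 hcmem.1, lt_of_le_of_lt hcmem.2 hb01.2⟩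
  have hiff : ∀ x ∈ Set.Ioo (0:ℝ) 1, (2*(h:ℝ)-1 ≤ f x ↔ x ≤ c) := by
    intro x hx
    rw [← hfc]
    exact hanti.le_iff_ge hcIoo hx
  -- key algebraic identity
  have key : ∀ t : ℝ, 0 < t → f t * t^(2*h)
      = ∑ ℓ ∈ Finset.Icc 1 (h-1), t ^ (2*ℓ) := by
    intro t ht
    show (∑ ℓ ∈ Finset.Icc 1 (h-1), (t ^ (2*ℓ))⁻¹) * t^(2*h) = _
    rw [Finset.sum_mul]
    have step : ∀ ℓ ∈ Finset.Icc 1 (h-1), (t ^ (2*ℓ))⁻¹ * t^(2*h) = t ^ (2*(h-ℓ)) := by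
      intro ℓ hℓ
      simp only [Finset.mem_Icc] at hℓ
      rw [show 2*h = 2*ℓ + 2*(h-ℓ) by omega, pow_add,
        inv_mul_cancel_left₀ (pow_ne_zero _ ht.ne')]
    rw [Finset.sum_congr rfl step]
    refine Finset.sum_nbij' (i := fun ℓ => h - ℓ) (j := fun ℓ => h - ℓ) ?_ ?_ ?_ ?_ ?_
    · intro ℓ hℓ; simp only [Finset.mem_Icc] at *; omega
    · intro ℓ hℓ; simp only [Finset.mem_Icc] at *; omega
    · intro ℓ hℓ; simp only [Finset.mem_Icc] at hℓ; show h - (h - ℓ) = ℓ; omega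
    · intro ℓ hℓ; simp only [Finset.mem_Icc] at hℓ; show h - (h - ℓ) = ℓ; omega
    · intro ℓ hℓ; rfl
  refine ⟨c, hcIoo, hfc, ?_, ?_, ?_⟩
  · intro c' hc' hfc'
    exact hanti.injOn hc' hcIoo (by rw [show f c' = _ from hfc', ← hfc])
  · intro ρ hρ0 hρ1
    exact hiff |ρ| ⟨hρ0, hρ1⟩
  · intro ρ hρ0 hρ1
    set t := |ρ| with htdef
    have heq1 : ∀ n : ℕ, ρ ^ (2*n) = t ^ (2*n) := by
      intro n
      rw [htdef, pow_abs, abs_of_nonneg (Even.pow_nonneg ⟨n, by ring⟩ ρ)]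
    have hrw : ∀ s : Finset ℕ, (∑ ℓ ∈ s, ρ^(2*ℓ)) = ∑ ℓ ∈ s, t^(2*ℓ) :=
      fun s => Finset.sum_congr rfl (fun ℓ _ => heq1 ℓ)
    rw [hrw, hrw, heq1 h, ← hiff t ⟨hρ0, hρ1⟩, ← key t hρ0]
    have hpow : (0:ℝ) < t ^ (2*h) := pow_pos hρ0 _
    constructor
    · intro hle
      have h1 : (2*(h:ℝ)-1) * t^(2*h) ≤ f t * t^(2*h) := by linarith
      exact le_of_mul_le_mul_right h1 hpow
    · intro hle
      have h1 : (2*(h:ℝ)-1) * t^(2*h) ≤ f t * t^(2*h) :=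
        mul_le_mul_of_nonneg_right hle hpow.le
      linarith
end
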